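/- arXiv:1305.6198 — 8 statements merged into one kernel-verified Lean document; each statement's English description precedes it below -/
import Mathlib

section
/- Let A : (α, β) → ℝ^{N×N} be a matrix-valued function with locally integrable entries such that A(t) has nonnegative off-diagonal entries for all t, and let x : (α, β) → ℝ^N be an absolutely continuous solution of x' = A(t)x with x(t₀) having all coordinates strictly positive. Then all coordinates of x(t) remain strictly positive for t ∈ [t₀, β). -/
open MeasureTheory Set Topology Filter

/-- Positivity of coordinates of Carathéodory solutions of cooperative linear systems. -/
theorem stmt1 {N : ℕ} {α β t₀ : ℝ} (ht₀ : t₀ ∈ Set.Ioo α β)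
    (A : ℝ → Matrix (Fin N) (Fin N) ℝ)
    (hint : ∀ i j, MeasureTheory.LocallyIntegrableOn (fun t => A t i j) (Set.Ioo α β))
    (hML : ∀ t ∈ Set.Ioo α β, ∀ i j, i ≠ j → 0 ≤ A t i j)
    (x : ℝ → Fin N → ℝ)
    (hcont : ∀ i, ContinuousOn (fun t => x t i) (Set.Ioo α β))
    (hsol : ∀ t ∈ Set.Ioo α β, ∀ i,
      x t i = x t₀ i + ∫ τ in t₀..t, ∑ j, A τ i j * x τ j)
    (hpos : ∀ i, 0 < x t₀ i) :
    ∀ t ∈ Set.Ico t₀ β, ∀ i, 0 < x t i := by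
  rcases isEmpty_or_nonempty (Fin N) with hN | hN
  · exact fun t _ i => (hN.false i).elim
  intro tstar htstar
  obtain ⟨ht₀α, ht₀β⟩ := ht₀
  obtain ⟨htt₀, htβ⟩ := htstar
  have hsub : Icc t₀ tstar ⊆ Ioo α β := fun s hs =>
    ⟨lt_of_lt_of_le ht₀α hs.1, lt_of_le_of_lt hs.2 htβ⟩
  by_contra hcon
  push_neg at hcon
  obtain ⟨i₀, hi₀⟩ := hcon
  -- the pointwise minimum of the coordinates
  set g : ℝ → ℝ := fun t => Finset.univ.inf' Finset.univ_nonempty (fun i => x t i) with hgdef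
  have hgcont : ContinuousOn g (Ioo α β) :=
    ContinuousOn.finset_inf'_apply Finset.univ_nonempty (fun i _ => hcont i)
  have hgle : ∀ t i, g t ≤ x t i := fun t i =>
    Finset.inf'_le _ (Finset.mem_univ i)
  -- the "bad" set
  set S : Set ℝ := Icc t₀ tstar ∩ g ⁻¹' (Iic 0) with hSdef
  have hSclosed : IsClosed S :=
    (hgcont.mono hsub).preimage_isClosed_of_isClosed isClosed_Icc isClosed_Iic
  have hSne : S.Nonempty :=
    ⟨tstar, ⟨htt₀, le_refl _⟩, le_trans (hgle tstar i₀) hi₀⟩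
  have hSbdd : BddBelow S := ⟨t₀, fun s hs => hs.1.1⟩
  set t₁ : ℝ := sInf S with ht₁def
  have ht₁S : t₁ ∈ S := hSclosed.csInf_mem hSne hSbdd
  have ht₁mem : t₁ ∈ Icc t₀ tstar := ht₁S.1
  have ht₁Ioo : t₁ ∈ Ioo α β := hsub ht₁mem
  have hgt₀ : 0 < g t₀ := by
    rw [hgdef]
    exact (Finset.lt_inf'_iff _).2 fun i _ => hpos i
  have ht₀lt : t₀ < t₁ := by
    rcases lt_or_eq_of_le ht₁mem.1 with h | h
    · exact h
    · exact absurd (h ▸ ht₁S.2) (not_le.2 hgt₀)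
  have hsub1 : Icc t₀ t₁ ⊆ Ioo α β := fun s hs =>
    hsub ⟨hs.1, le_trans hs.2 ht₁mem.2⟩
  -- strict positivity before t₁
  have hpre : ∀ s ∈ Ico t₀ t₁, ∀ j, 0 < x s j := by
    intro s hs j
    have hsnot : s ∉ S := fun hmem => not_lt.2 (csInf_le hSbdd hmem) hs.2
    have hsIcc : s ∈ Icc t₀ tstar := ⟨hs.1, le_trans hs.2.le ht₁mem.2⟩
    have : ¬ g s ≤ 0 := fun h => hsnot ⟨hsIcc, h⟩
    exact lt_of_lt_of_le (not_le.1 this) (hgle s j)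
  -- nonnegativity up to t₁
  have hnn : ∀ s ∈ Icc t₀ t₁, ∀ j, 0 ≤ x s j := by
    intro s hs j
    rcases lt_or_eq_of_le hs.2 with h | h
    · exact (hpre s ⟨hs.1, h⟩ j).le
    · have hc : ContinuousAt (fun t => x t j) s :=
        (hcont j).continuousAt (Ioo_mem_nhds (hsub1 hs).1 (hsub1 hs).2)
      have ht₀s : t₀ < s := h ▸ ht₀lt
      have hne : (𝓝[Ico t₀ s] s).NeBot := by
        rw [← mem_closure_iff_nhdsWithin_neBot, closure_Ico ht₀s.ne]
        exact right_mem_Icc.2 ht₀s.le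
      refine ge_of_tendsto ((hc.continuousWithinAt (s := Ico t₀ s)).tendsto) ?_
      filter_upwards [self_mem_nhdsWithin] with τ hτ
      exact (hpre τ ⟨hτ.1, h ▸ hτ.2⟩ j).le
  -- the crossing coordinate
  obtain ⟨i, -, hieq⟩ := Finset.exists_mem_eq_inf' (Finset.univ_nonempty) (fun j => x t₁ j)
  have hxt₁ : x t₁ i = 0 :=
    le_antisymm (hieq ▸ ht₁S.2) (hnn t₁ ⟨ht₀lt.le, le_refl _⟩ i)
  -- integrability
  set c : ℝ → ℝ := fun τ => |A τ i i| with hcdef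
  have hcint : IntegrableOn c (Icc t₀ t₁) :=
    ((hint i i).integrableOn_compact_subset hsub1 isCompact_Icc).abs
  set f : ℝ → ℝ := fun τ => ∑ j, A τ i j * x τ j with hfdef
  have hfint : IntegrableOn f (Icc t₀ t₁) := by
    apply MeasureTheory.integrable_finset_sum
    intro j _
    exact ((hint i j).integrableOn_compact_subset hsub1 isCompact_Icc).mul_continuousOn
      ((hcont j).mono hsub1) isCompact_Icc
  have hcI : ∀ a b, t₀ ≤ a → a ≤ b → b ≤ t₁ → IntervalIntegrable c volume a b := by
    intro a b h1 h2 h3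
    exact (hcint.mono_set (by rw [uIcc_of_le h2]; exact Icc_subset_Icc h1 h3)).intervalIntegrable
  have hfI : ∀ a b, t₀ ≤ a → a ≤ b → b ≤ t₁ → IntervalIntegrable f volume a b := by
    intro a b h1 h2 h3
    exact (hfint.mono_set (by rw [uIcc_of_le h2]; exact Icc_subset_Icc h1 h3)).intervalIntegrable
  -- the primitive of c
  set F : ℝ → ℝ := fun t => ∫ τ in t₀..t, c τ with hFdef
  have hFcont : ContinuousOn F (Icc t₀ t₁) := by
    have := intervalIntegral.continuousOn_primitive_interval
      (f := c) (μ := volume) (a := t₀) (b := t₁) (by rwa [uIcc_of_le ht₀lt.le])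
    rwa [uIcc_of_le ht₀lt.le] at this
  have hneB : (𝓝[Ico t₀ t₁] t₁).NeBot := by
    rw [← mem_closure_iff_nhdsWithin_neBot, closure_Ico ht₀lt.ne]
    exact right_mem_Icc.2 ht₀lt.le
  have hFt : Filter.Tendsto F (𝓝[Ico t₀ t₁] t₁) (𝓝 (F t₁)) :=
    ((hFcont t₁ (right_mem_Icc.2 ht₀lt.le)).mono_left (nhdsWithin_mono _ Ico_subset_Icc_self))
  have hev : ∀ᶠ s in 𝓝[Ico t₀ t₁] t₁, F t₁ - 1/2 < F s :=
    hFt.eventually (eventually_gt_nhds (by linarith))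
  obtain ⟨s₀, hs₀F, hs₀Ico⟩ := (hev.and self_mem_nhdsWithin).exists
  have hs₀t₀ : t₀ ≤ s₀ := hs₀Ico.1
  have hs₀t₁ : s₀ < t₁ := hs₀Ico.2
  have hcsmall : (∫ τ in s₀..t₁, c τ) ≤ 1/2 := by
    have hadd := intervalIntegral.integral_add_adjacent_intervals
      (hcI t₀ s₀ le_rfl hs₀t₀ hs₀t₁.le) (hcI s₀ t₁ hs₀t₀ hs₀t₁.le le_rfl)
    have : F s₀ + (∫ τ in s₀..t₁, c τ) = F t₁ := hadd
    linarith
  -- the maximum of x · i on [s₀, t₁]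
  obtain ⟨tm, htm, htmmax⟩ := isCompact_Icc.exists_isMaxOn (nonempty_Icc.2 hs₀t₁.le)
    ((hcont i).mono (fun s hs => hsub1 ⟨le_trans hs₀t₀ hs.1, hs.2⟩))
  set U : ℝ := x tm i with hUdef
  have hUpos : 0 < U :=
    lt_of_lt_of_le (hpre s₀ ⟨hs₀t₀, hs₀t₁⟩ i) (htmmax (left_mem_Icc.2 hs₀t₁.le))
  have htmIcc : tm ∈ Icc t₀ t₁ := ⟨le_trans hs₀t₀ htm.1, htm.2⟩
  -- the key integral identity at tm
  have hkey : x tm i = - ∫ τ in tm..t₁, f τ := by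
    have h1 := hsol tm (hsub1 htmIcc) i
    have h2 := hsol t₁ ht₁Ioo i
    have hadd := intervalIntegral.integral_add_adjacent_intervals
      (hfI t₀ tm le_rfl htmIcc.1 htmIcc.2) (hfI tm t₁ htmIcc.1 htm.2 le_rfl)
    rw [hxt₁] at h2
    have : x tm i - 0 = (∫ τ in t₀..tm, f τ) - ∫ τ in t₀..t₁, f τ := by
      rw [h1, h2]; ring
    linarith [this, hadd]
  -- pointwise bound
  have hpt : ∀ τ ∈ Icc tm t₁, -f τ ≤ c τ * U := by
    intro τ hτ
    have hτIcc : τ ∈ Icc t₀ t₁ := ⟨le_trans htmIcc.1 hτ.1, hτ.2⟩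
    have hτIoo : τ ∈ Ioo α β := hsub1 hτIcc
    have hxτ : 0 ≤ x τ i := hnn τ hτIcc i
    have hsum : A τ i i * x τ i ≤ f τ := by
      have h0 : 0 ≤ ∑ j ∈ Finset.univ.erase i, A τ i j * x τ j := by
        apply Finset.sum_nonneg
        intro j hj
        exact mul_nonneg (hML τ hτIoo i j (Ne.symm (Finset.ne_of_mem_erase hj)))
          (hnn τ hτIcc j)
      rw [Finset.sum_erase_eq_sub (Finset.mem_univ i)] at h0
      show A τ i i * x τ i ≤ ∑ j, A τ i j * x τ j
      linarith
    have h1 : -f τ ≤ (-A τ i i) * x τ i := by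
      have := neg_le_neg hsum; rw [neg_mul] at *; linarith
    have h2 : (-A τ i i) * x τ i ≤ c τ * x τ i :=
      mul_le_mul_of_nonneg_right (neg_le_abs _) hxτ
    have h3 : c τ * x τ i ≤ c τ * U :=
      mul_le_mul_of_nonneg_left (htmmax ⟨le_trans htm.1 hτ.1, hτ.2⟩) (abs_nonneg _)
    linarith
  -- conclude
  have hmono : (∫ τ in tm..t₁, -f τ) ≤ ∫ τ in tm..t₁, c τ * U := by
    apply intervalIntegral.integral_mono_on htm.2
      ((hfI tm t₁ htmIcc.1 htm.2 le_rfl).neg)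
      ((hcI tm t₁ htmIcc.1 htm.2 le_rfl).mul_const U)
    exact hpt
  have hsplit : (∫ τ in tm..t₁, c τ) ≤ 1/2 := by
    have hadd := intervalIntegral.integral_add_adjacent_intervals
      (hcI s₀ tm hs₀t₀ htm.1 htm.2) (hcI tm t₁ htmIcc.1 htm.2 le_rfl)
    have hnn1 : 0 ≤ ∫ τ in s₀..tm, c τ :=
      intervalIntegral.integral_nonneg htm.1 (fun τ _ => abs_nonneg _)
    linarith
  have hfinal : U ≤ (1/2) * U := by
    calc U = - ∫ τ in tm..t₁, f τ := hkey
    _ = ∫ τ in tm..t₁, -f τ := by rw [intervalIntegral.integral_neg]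
    _ ≤ ∫ τ in tm..t₁, c τ * U := hmono
    _ = (∫ τ in tm..t₁, c τ) * U := by rw [intervalIntegral.integral_mul_const]
    _ ≤ (1/2) * U := mul_le_mul_of_nonneg_right hsplit hUpos.le
  linarith
end

section
/- Let A : (α, β) → ℝ^{N×N} have locally integrable entries with A(t) an ML-matrix for each t, and let x(t) = (x₁(t), …, x_N(t)) be a Carathéodory solution of x' = A(t)x with all coordinates of x(t₀) strictly positive. Then for all t ∈ (t₀, β): ∏ᵢ xᵢ(t) ≥ exp(∫_{t₀}^t (tr A(τ) + 2 ∑_{j<k} √(a_{jk}(τ) a_{kj}(τ))) dτ) · ∏ᵢ xᵢ(t₀). -/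
open MeasureTheory Set Filter Topology

lemma two_sqrt_le {s t : ℝ} (hs : 0 ≤ s) (ht : 0 ≤ t) :
    2 * Real.sqrt (s * t) ≤ s + t := by
  rw [Real.sqrt_mul hs]
  calc 2 * (Real.sqrt s * Real.sqrt t) = 2 * Real.sqrt s * Real.sqrt t := by ring
  _ ≤ Real.sqrt s ^ 2 + Real.sqrt t ^ 2 := two_mul_le_add_sq _ _
  _ = s + t := by rw [Real.sq_sqrt hs, Real.sq_sqrt ht]

lemma sum_pairs {N : ℕ} (c : Fin N → Fin N → ℝ) :
    ∑ p ∈ Finset.univ.filter (fun p : Fin N × Fin N => p.1 ≠ p.2), c p.1 p.2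
    = ∑ p ∈ Finset.univ.filter (fun p : Fin N × Fin N => p.1 < p.2),
        (c p.1 p.2 + c p.2 p.1) := by
  rw [Finset.sum_add_distrib]
  have h1 : (Finset.univ.filter (fun p : Fin N × Fin N => p.1 ≠ p.2))
      = (Finset.univ.filter (fun p : Fin N × Fin N => p.1 < p.2)) ∪
        (Finset.univ.filter (fun p : Fin N × Fin N => p.2 < p.1)) := by
    ext p
    simp only [Finset.mem_filter, Finset.mem_union, Finset.mem_univ, true_and]
    constructor
    · exact fun h => lt_or_gt_of_ne h
    · rintro (h | h)
      · exact ne_of_lt h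
      · exact (ne_of_lt h).symm
  have hd : Disjoint (Finset.univ.filter (fun p : Fin N × Fin N => p.1 < p.2))
      (Finset.univ.filter (fun p : Fin N × Fin N => p.2 < p.1)) := by
    rw [Finset.disjoint_left]
    intro p hp hp'
    simp only [Finset.mem_filter] at hp hp'
    exact absurd (lt_trans hp.2 hp'.2) (lt_irrefl _)
  rw [h1, Finset.sum_union hd]
  congr 1
  exact Finset.sum_nbij' Prod.swap Prod.swap
    (by intro p hp; simp only [Finset.mem_filter, Finset.mem_univ, true_and] at *; exact hp)
    (by intro p hp; simp only [Finset.mem_filter, Finset.mem_univ, true_and] at *; exact hp)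
    (by intro p _; simp) (by intro p _; simp)
    (by intro p _; rfl)

lemma sum_sum_split {N : ℕ} (c : Fin N → Fin N → ℝ) :
    ∑ i, ∑ j, c i j = (∑ i, c i i) +
      ∑ p ∈ Finset.univ.filter (fun p : Fin N × Fin N => p.1 ≠ p.2), c p.1 p.2 := by
  rw [← Finset.sum_product']
  rw [← Finset.sum_filter_add_sum_filter_not (Finset.univ ×ˢ Finset.univ)
    (fun p : Fin N × Fin N => p.1 = p.2)]
  congr 1
  · rw [Finset.sum_filter]
    rw [Finset.sum_product]
    simp [Finset.sum_ite_eq]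

lemma abs_log_sub_log_le {u v m : ℝ} (hm : 0 < m) (hu : m ≤ u) (hv : m ≤ v) :
    |Real.log u - Real.log v| ≤ |u - v| / m := by
  have key : ∀ p q : ℝ, m ≤ p → m ≤ q → Real.log p - Real.log q ≤ |p - q| / m := by
    intro p q hp hq
    rcases le_total p q with h | h
    · have h1 : Real.log p ≤ Real.log q :=
        Real.log_le_log (lt_of_lt_of_le hm hp) h
      have : (0:ℝ) ≤ |p - q| / m := div_nonneg (abs_nonneg _) hm.le
      linarith
    · have hq0 : 0 < q := lt_of_lt_of_le hm hq
      have hp0 : 0 < p := lt_of_lt_of_le hm hp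
      have h1 : Real.log p - Real.log q = Real.log (p / q) :=
        (Real.log_div hp0.ne' hq0.ne').symm
      have h2 : Real.log (p / q) ≤ p / q - 1 :=
        Real.log_le_sub_one_of_pos (div_pos hp0 hq0)
      have h3 : p / q - 1 = (p - q) / q := by field_simp
      have h4 : (p - q) / q ≤ (p - q) / m := by
        gcongr
      have h5 : (p - q) / m ≤ |p - q| / m := by
        gcongr
        exact le_abs_self _
      linarith
  rw [abs_sub_le_iff]
  refine ⟨key u v hu hv, (key v u hv hu).trans_eq ?_⟩
  rw [abs_sub_comm]

lemma div_integrableOn {a b m : ℝ} {f F : ℝ → ℝ} (hf : IntegrableOn f (Icc a b))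
    (hFc : ContinuousOn F (Icc a b)) (hm : 0 < m) (hF : ∀ t ∈ Icc a b, m ≤ F t) :
    IntegrableOn (fun t => f t / F t) (Icc a b) := by
  have hne : ∀ t ∈ Icc a b, F t ≠ 0 := fun t ht => (lt_of_lt_of_le hm (hF t ht)).ne'
  have hinv : ContinuousOn (fun t => (F t)⁻¹) (Icc a b) := hFc.inv₀ hne
  have haesm : AEStronglyMeasurable (fun t => (F t)⁻¹) (volume.restrict (Icc a b)) :=
    hinv.aestronglyMeasurable measurableSet_Icc
  have hbdd : ∀ᵐ t ∂(volume.restrict (Icc a b)), ‖(F t)⁻¹‖ ≤ m⁻¹ := by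
    refine (ae_restrict_iff' measurableSet_Icc).2 (ae_of_all _ fun t ht => ?_)
    rw [Real.norm_eq_abs, abs_inv, abs_of_pos (lt_of_lt_of_le hm (hF t ht))]
    exact inv_anti₀ hm (hF t ht)
  have := hf.bdd_mul haesm hbdd
  simpa [div_eq_mul_inv, mul_comm, IntegrableOn] using this

lemma primitive_continuousOn {a b : ℝ} {c : ℝ} {f : ℝ → ℝ} (hf : IntegrableOn f (Icc a b)) :
    ContinuousOn (fun t => c + ∫ τ in a..t, f τ) (Icc a b) := by
  refine continuousOn_const.add ((intervalIntegral.continuousOn_primitive hf).congr ?_)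
  intro t ht
  exact intervalIntegral.integral_of_le ht.1


lemma key_log {a b c : ℝ} (hab : a ≤ b) {f G : ℝ → ℝ}
    (hf : IntegrableOn f (Icc a b))
    (hGdef : ∀ t ∈ Icc a b, G t = c + ∫ τ in a..t, f τ)
    (hpos : ∀ t ∈ Icc a b, 0 < G t) :
    Real.log (G b) - Real.log (G a) = ∫ τ in a..b, f τ / G τ := by
  have hmem_a : a ∈ Icc a b := left_mem_Icc.2 hab
  have hmem_b : b ∈ Icc a b := right_mem_Icc.2 hab
  have hGa : G a = c := by rw [hGdef a hmem_a]; simp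
  have hGc : ContinuousOn G (Icc a b) := (primitive_continuousOn hf).congr hGdef
  obtain ⟨tm, htm, hmin⟩ := isCompact_Icc.exists_isMinOn (nonempty_Icc.2 hab) hGc
  obtain ⟨m, hm_def⟩ : ∃ m : ℝ, m = G tm := ⟨_, rfl⟩
  have hm : 0 < m := hm_def ▸ hpos tm htm
  have hmle : ∀ t ∈ Icc a b, m ≤ G t := fun t ht => hm_def ▸ hmin ht
  obtain ⟨I, hI_def⟩ : ∃ I : ℝ, I = ∫ τ in Icc a b, |f τ| := ⟨_, rfl⟩
  have hInn : 0 ≤ I := hI_def ▸ integral_nonneg fun τ => abs_nonneg _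
  have habs : IntegrableOn (fun τ => |f τ|) (Icc a b) := hf.abs
  have hGdiv : IntegrableOn (fun τ => f τ / G τ) (Icc a b) :=
    div_integrableOn hf hGc hm hmle
  have hGdivInt : IntervalIntegrable (fun τ => f τ / G τ) volume a b :=
    (intervalIntegrable_iff_integrableOn_Ioc_of_le hab).2
      (hGdiv.mono_set Ioc_subset_Icc_self)
  obtain ⟨X, hX⟩ : ∃ X : ℝ,
      X = Real.log (G b) - Real.log (G a) - ∫ τ in a..b, f τ / G τ := ⟨_, rfl⟩
  obtain ⟨C, hC⟩ : ∃ C : ℝ, C = 4 / m + 2 * I / m ^ 2 := ⟨_, rfl⟩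
  have hCnn : 0 ≤ C := by rw [hC]; positivity
  have main : ∀ ε : ℝ, 0 < ε → ε ≤ m / 2 → |X| ≤ ε * C := by
    intro ε hε hεm
    have hf' : Integrable ((Icc a b).indicator f) volume :=
      hf.integrable_indicator measurableSet_Icc
    obtain ⟨g, -, hgclose, hgcont, hgint⟩ :=
      hf'.exists_hasCompactSupport_integral_sub_le hε
    have hclose : ∫ τ in Icc a b, |f τ - g τ| ≤ ε := by
      have h1 : ∫ τ in Icc a b, |f τ - g τ|
          = ∫ τ in Icc a b, ‖(Icc a b).indicator f τ - g τ‖ := by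
        refine setIntegral_congr_fun measurableSet_Icc fun τ hτ => ?_
        rw [indicator_of_mem hτ, Real.norm_eq_abs]
      rw [h1]
      refine le_trans (setIntegral_le_integral ((hf'.sub hgint).norm)
        (ae_of_all _ fun τ => norm_nonneg _)) hgclose
    have hfg_int : IntegrableOn (fun τ => |f τ - g τ|) (Icc a b) :=
      (hf.sub hgint.integrableOn).abs
    obtain ⟨Gg, hGg⟩ : ∃ Gg : ℝ → ℝ, Gg = fun t => c + ∫ τ in a..t, g τ := ⟨_, rfl⟩
    have hGga : Gg a = c := by rw [hGg]; simp
    have hGgG : ∀ t ∈ Icc a b, |Gg t - G t| ≤ ε := by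
      intro t ht
      have h1 : Gg t - G t = ∫ τ in a..t, (g τ - f τ) := by
        rw [hGg, hGdef t ht]
        rw [intervalIntegral.integral_sub (hgcont.intervalIntegrable _ _)
          ((intervalIntegrable_iff_integrableOn_Ioc_of_le ht.1).2
            ((hf.mono_set (Icc_subset_Icc le_rfl ht.2)).mono_set Ioc_subset_Icc_self))]
        ring
      rw [h1]
      calc |∫ τ in a..t, (g τ - f τ)| ≤ ∫ τ in a..t, |g τ - f τ| :=
            intervalIntegral.abs_integral_le_integral_abs ht.1
        _ = ∫ τ in Ioc a t, |g τ - f τ| := intervalIntegral.integral_of_le ht.1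
        _ ≤ ∫ τ in Icc a b, |g τ - f τ| := by
            refine setIntegral_mono_set
              (hfg_int.congr_fun (fun τ _ => (abs_sub_comm _ _)) measurableSet_Icc)
              (ae_of_all _ fun τ => abs_nonneg _)
              (HasSubset.Subset.eventuallyLE (fun τ hτ =>
                ⟨hτ.1.le, hτ.2.trans ht.2⟩))
        _ = ∫ τ in Icc a b, |f τ - g τ| :=
            setIntegral_congr_fun measurableSet_Icc fun τ _ => abs_sub_comm _ _
        _ ≤ ε := hclose
    have hGgpos : ∀ t ∈ Icc a b, m / 2 ≤ Gg t := by
      intro t ht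
      have h1 := abs_le.1 (hGgG t ht)
      have h2 := hmle t ht
      linarith [h1.1, h1.2]
    have hGgD : ∀ t : ℝ, HasDerivAt Gg (g t) t := by
      intro t
      rw [hGg]
      exact (intervalIntegral.integral_hasDerivAt_right
        (hgcont.intervalIntegrable _ _)
        (hgcont.stronglyMeasurableAtFilter volume _)
        hgcont.continuousAt).const_add c
    have hGgcont : Continuous Gg := by
      refine continuous_iff_continuousAt.2 fun t => (hGgD t).continuousAt
    have hGgcontOn : ContinuousOn Gg (Icc a b) := hGgcont.continuousOn
    have hGgne : ∀ t ∈ Icc a b, Gg t ≠ 0 :=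
      fun t ht => (lt_of_lt_of_le (by linarith) (hGgpos t ht)).ne'
    have hlog : ∫ τ in a..b, g τ / Gg τ = Real.log (Gg b) - Real.log (Gg a) := by
      refine intervalIntegral.integral_eq_sub_of_hasDerivAt (f := fun u => Real.log (Gg u)) ?_ ?_
      · intro t ht
        rw [uIcc_of_le hab] at ht
        exact (hGgD t).log (hGgne t ht)
      · refine (intervalIntegrable_iff_integrableOn_Ioc_of_le hab).2 ?_
        refine ((hgcont.continuousOn.div hGgcontOn hGgne).integrableOn_Icc).mono_set
          Ioc_subset_Icc_self
    have hggdiv : IntegrableOn (fun τ => g τ / Gg τ) (Icc a b) :=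
      (hgcont.continuousOn.div hGgcontOn hGgne).integrableOn_Icc
    have hggdivInt : IntervalIntegrable (fun τ => g τ / Gg τ) volume a b :=
      (intervalIntegrable_iff_integrableOn_Ioc_of_le hab).2
        (hggdiv.mono_set Ioc_subset_Icc_self)
    -- pointwise bound for the integrand difference
    have hptwise : ∀ t ∈ Icc a b,
        |g t / Gg t - f t / G t| ≤ |f t - g t| / (m/2) + |f t| * (ε / ((m/2) * m)) := by
      intro t ht
      have hGt : 0 < G t := hpos t ht
      have hGgt : 0 < Gg t := lt_of_lt_of_le (by linarith) (hGgpos t ht)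
      have e1 : g t / Gg t - f t / G t
          = (g t - f t) / Gg t + f t * ((G t - Gg t) / (Gg t * G t)) := by
        field_simp
        ring
      rw [e1]
      refine (abs_add_le _ _).trans (add_le_add ?_ ?_)
      · rw [abs_div, abs_of_pos hGgt, abs_sub_comm]
        gcongr <;> first | exact abs_nonneg _ | exact hGgpos t ht | linarith
      · rw [abs_mul, abs_div, abs_of_pos (mul_pos hGgt hGt), abs_sub_comm]
        gcongr <;> first | exact abs_nonneg _ | exact hGgG t ht | exact hGgpos t ht | exact hmle t ht | linarith
    -- integrable bound
    have hbnd_int : IntegrableOn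
        (fun t => |f t - g t| / (m/2) + |f t| * (ε / ((m/2) * m))) (Icc a b) :=
      (hfg_int.div_const _).add (habs.mul_const _)
    have hdiff_int : IntegrableOn
        (fun t => |g t / Gg t - f t / G t|) (Icc a b) := (hggdiv.sub hGdiv).abs
    have hterm3 : |(∫ τ in a..b, g τ / Gg τ) - ∫ τ in a..b, f τ / G τ|
        ≤ ε / (m/2) + I * (ε / ((m/2) * m)) := by
      rw [← intervalIntegral.integral_sub hggdivInt hGdivInt]
      calc |∫ τ in a..b, (g τ / Gg τ - f τ / G τ)|
          ≤ ∫ τ in a..b, |g τ / Gg τ - f τ / G τ| :=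
            intervalIntegral.abs_integral_le_integral_abs hab
        _ = ∫ τ in Ioc a b, |g τ / Gg τ - f τ / G τ| :=
            intervalIntegral.integral_of_le hab
        _ ≤ ∫ τ in Icc a b, |g τ / Gg τ - f τ / G τ| :=
            setIntegral_mono_set hdiff_int (ae_of_all _ fun τ => abs_nonneg _)
              (HasSubset.Subset.eventuallyLE Ioc_subset_Icc_self)
        _ ≤ ∫ τ in Icc a b, (|f τ - g τ| / (m/2) + |f τ| * (ε / ((m/2) * m))) :=
            setIntegral_mono_on hdiff_int hbnd_int measurableSet_Icc hptwise
        _ = (∫ τ in Icc a b, |f τ - g τ|) / (m/2)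
              + (∫ τ in Icc a b, |f τ|) * (ε / ((m/2) * m)) := by
            rw [integral_add (hfg_int.div_const _) (habs.mul_const _),
              MeasureTheory.integral_div, MeasureTheory.integral_mul_const]
        _ ≤ ε / (m/2) + I * (ε / ((m/2) * m)) := by
            rw [← hI_def]
            gcongr <;> first | exact hclose | linarith
    have hterm1 : |Real.log (G b) - Real.log (Gg b)| ≤ ε / (m/2) := by
      refine (abs_log_sub_log_le (by linarith : (0:ℝ) < m/2)
        (le_trans (by linarith) (hmle b hmem_b)) (hGgpos b hmem_b)).trans ?_
      gcongr
      rw [abs_sub_comm]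
      exact hGgG b hmem_b
    have hXdecomp : X = (Real.log (G b) - Real.log (Gg b))
        + ((∫ τ in a..b, g τ / Gg τ) - ∫ τ in a..b, f τ / G τ) := by
      rw [hX, hlog, hGga, hGa]
      ring
    have : |X| ≤ ε / (m/2) + (ε / (m/2) + I * (ε / ((m/2) * m))) := by
      rw [hXdecomp]
      exact (abs_add_le _ _).trans (add_le_add hterm1 hterm3)
    refine this.trans (le_of_eq ?_)
    rw [hC]
    field_simp
    ring
  by_contra hne
  have hXne : X ≠ 0 := fun h => hne (by rw [hX] at h; linarith)
  have hX0 : 0 < |X| := abs_pos.2 hXne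
  have hε : 0 < min (m/2) (|X|/(2*(C+1))) := lt_min (by linarith) (by positivity)
  have h2 := main _ hε (min_le_left _ _)
  have h3 : min (m/2) (|X|/(2*(C+1))) * C ≤ |X|/(2*(C+1)) * C :=
    mul_le_mul_of_nonneg_right (min_le_right _ _) hCnn
  have h4 : |X| ≤ |X|/(2*(C+1)) * C := h2.trans h3
  rw [div_mul_eq_mul_div, le_div_iff₀ (by positivity)] at h4
  nlinarith

lemma div_integrableOn' {a b : ℝ} {f F : ℝ → ℝ} (hab : a ≤ b)
    (hf : IntegrableOn f (Icc a b))
    (hFc : ContinuousOn F (Icc a b)) (hFpos : ∀ t ∈ Icc a b, 0 < F t) :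
    IntegrableOn (fun t => f t / F t) (Icc a b) := by
  obtain ⟨tm, htm, hmin⟩ := isCompact_Icc.exists_isMinOn (nonempty_Icc.2 hab) hFc
  exact div_integrableOn hf hFc (hFpos tm htm) fun t ht => hmin ht

lemma pos_on {N : ℕ} {α β t₀ t₁ : ℝ} (ht₀ : t₀ ∈ Ioo α β) (ht₁ : t₁ ∈ Ioo t₀ β)
    {A : ℝ → Matrix (Fin N) (Fin N) ℝ}
    (hAint : ∀ i j, IntegrableOn (fun t => A t i j) (Icc t₀ t₁))
    (hML : ∀ t ∈ Icc t₀ t₁, ∀ i j, i ≠ j → 0 ≤ A t i j)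
    {x : ℝ → Fin N → ℝ}
    (hcont : ∀ i, ContinuousOn (fun t => x t i) (Ioo α β))
    (hsub : Icc t₀ t₁ ⊆ Ioo α β)
    (hsol : ∀ t ∈ Icc t₀ t₁, ∀ i,
      x t i = x t₀ i + ∫ τ in t₀..t, ∑ j, A τ i j * x τ j)
    (hxint : ∀ i, IntegrableOn (fun τ => ∑ j, A τ i j * x τ j) (Icc t₀ t₁))
    (hpos : ∀ i, 0 < x t₀ i) :
    ∀ s ∈ Icc t₀ t₁, ∀ i, 0 < x s i := by
  have h01 : t₀ ≤ t₁ := ht₁.1.le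
  have hcontAt : ∀ i, ∀ s ∈ Icc t₀ t₁, ContinuousAt (fun t => x t i) s := fun i s hs =>
    (hcont i).continuousAt (Ioo_mem_nhds (hsub hs).1 (hsub hs).2)
  obtain ⟨K, hK_def⟩ : ∃ K : Fin N → ℝ, K = fun i => ∫ τ in Icc t₀ t₁, |A τ i i| := ⟨_, rfl⟩
  have hKnn : ∀ i, 0 ≤ K i := fun i => hK_def ▸ integral_nonneg fun τ => abs_nonneg _
  obtain ⟨m, hm_def⟩ : ∃ m : Fin N → ℝ, m = fun i => x t₀ i * Real.exp (-(K i)) := ⟨_, rfl⟩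
  have hmpos : ∀ i, 0 < m i := fun i => hm_def ▸ mul_pos (hpos i) (Real.exp_pos _)
  have hmle : ∀ i, m i ≤ x t₀ i := by
    intro i
    rw [hm_def]
    calc x t₀ i * Real.exp (-(K i)) ≤ x t₀ i * 1 := by
          refine mul_le_mul_of_nonneg_left ?_ (hpos i).le
          rw [← Real.exp_zero]
          exact Real.exp_le_exp.2 (by linarith [hKnn i])
      _ = x t₀ i := mul_one _
  set S : Set ℝ := {T | T ∈ Icc t₀ t₁ ∧ ∀ s ∈ Icc t₀ T, ∀ i, 0 < x s i} with hS
  have hS0 : t₀ ∈ S := ⟨left_mem_Icc.2 h01, fun s hs i => by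
    rw [le_antisymm hs.2 hs.1]; exact hpos i⟩
  have hSne : S.Nonempty := ⟨t₀, hS0⟩
  have hSbdd : BddAbove S := ⟨t₁, fun T hT => hT.1.2⟩
  -- quantitative lower bound on members of S
  have hquant : ∀ T ∈ S, ∀ i, m i ≤ x T i := by
    rintro T ⟨hTmem, hTpos⟩ i
    rcases eq_or_lt_of_le hTmem.1 with h | h
    · rw [← h]; exact hmle i
    · have hIccT : Icc t₀ T ⊆ Icc t₀ t₁ := Icc_subset_Icc le_rfl hTmem.2
      have hfI : IntegrableOn (fun τ => ∑ j, A τ i j * x τ j) (Icc t₀ T) :=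
        (hxint i).mono_set hIccT
      have hkey := key_log (f := fun τ => ∑ j, A τ i j * x τ j) (G := fun t => x t i)
        hTmem.1 hfI (fun t ht => hsol t (hIccT ht) i) (fun t ht => hTpos t ht i)
      have hdivI : IntegrableOn (fun τ => (∑ j, A τ i j * x τ j) / x τ i) (Icc t₀ T) :=
        div_integrableOn' hTmem.1 hfI
          (((hcont i).mono (fun s hs => hsub (hIccT hs)))) (fun t ht => hTpos t ht i)
      have hAii : IntervalIntegrable (fun τ => A τ i i) volume t₀ T :=
        (intervalIntegrable_iff_integrableOn_Ioc_of_le hTmem.1).2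
          (((hAint i i).mono_set hIccT).mono_set Ioc_subset_Icc_self)
      have hmono : ∫ τ in t₀..T, A τ i i
          ≤ ∫ τ in t₀..T, (∑ j, A τ i j * x τ j) / x τ i := by
        refine intervalIntegral.integral_mono_on hTmem.1 hAii
          ((intervalIntegrable_iff_integrableOn_Ioc_of_le hTmem.1).2
            (hdivI.mono_set Ioc_subset_Icc_self)) ?_
        intro τ hτ
        rw [le_div_iff₀ (hTpos τ hτ i)]
        have h2 : A τ i i * x τ i + ∑ j ∈ Finset.univ.erase i, A τ i j * x τ j
            = ∑ j, A τ i j * x τ j := by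
          simpa using Finset.add_sum_erase Finset.univ (fun j => A τ i j * x τ j)
            (Finset.mem_univ i)
        have hrest : 0 ≤ ∑ j ∈ Finset.univ.erase i, A τ i j * x τ j := by
          refine Finset.sum_nonneg fun j hj => ?_
          exact mul_nonneg (hML τ (hIccT hτ) i j (Finset.ne_of_mem_erase hj).symm)
            (hTpos τ hτ j).le
        linarith [hrest, h2.le, h2.ge]
      have hKbd : -(K i) ≤ ∫ τ in t₀..T, A τ i i := by
        have habs : |∫ τ in t₀..T, A τ i i| ≤ K i := by
          calc |∫ τ in t₀..T, A τ i i| ≤ ∫ τ in t₀..T, |A τ i i| :=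
                intervalIntegral.abs_integral_le_integral_abs hTmem.1
            _ = ∫ τ in Ioc t₀ T, |A τ i i| := intervalIntegral.integral_of_le hTmem.1
            _ ≤ ∫ τ in Icc t₀ t₁, |A τ i i| := by
                refine setIntegral_mono_set (hAint i i).abs
                  (ae_of_all _ fun τ => abs_nonneg _)
                  (HasSubset.Subset.eventuallyLE
                    (fun τ hτ => hIccT (Ioc_subset_Icc_self hτ)))
            _ = K i := by rw [hK_def]
        linarith [(abs_le.1 habs).1]
      have hlogge : Real.log (x t₀ i) - K i ≤ Real.log (x T i) := by
        have := hkey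
        linarith [hmono, hKbd, this.ge, this.le]
      calc m i = x t₀ i * Real.exp (-(K i)) := by rw [hm_def]
        _ = Real.exp (Real.log (x t₀ i) - K i) := by
            rw [Real.exp_sub, Real.exp_log (hpos i), Real.exp_neg]; ring
        _ ≤ Real.exp (Real.log (x T i)) := Real.exp_le_exp.2 hlogge
        _ = x T i := Real.exp_log (hTpos T ⟨hTmem.1, le_rfl⟩ i)
  -- the supremum of S
  obtain ⟨Ts, hTs_def⟩ : ∃ Ts : ℝ, Ts = sSup S := ⟨_, rfl⟩
  have hTs_le : Ts ≤ t₁ := hTs_def ▸ csSup_le hSne (fun T hT => hT.1.2)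
  have hTs_ge : t₀ ≤ Ts := hTs_def ▸ le_csSup hSbdd hS0
  have hTsS : Ts ∈ S := by
    refine ⟨⟨hTs_ge, hTs_le⟩, fun s hs i => ?_⟩
    rcases lt_or_eq_of_le hs.2 with hlt | heq
    · obtain ⟨T, hTS, hsT⟩ := exists_lt_of_lt_csSup hSne (hTs_def ▸ hlt)
      exact hTS.2 s ⟨hs.1, hsT.le⟩ i
    · rcases eq_or_lt_of_le hTs_ge with h0 | h0
      · have : s = t₀ := by rw [heq, ← h0]
        rw [this]; exact hpos i
      -- s = Ts > t₀ : take the limit from the left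
      · have hev : ∀ᶠ u in 𝓝[<] Ts, m i ≤ x u i := by
          have hev1 : ∀ᶠ u in 𝓝[<] Ts, t₀ < u :=
            eventually_nhdsWithin_of_eventually_nhds (eventually_gt_nhds h0)
          filter_upwards [hev1, self_mem_nhdsWithin] with u hu1 hu2
          obtain ⟨T, hTS, huT⟩ := exists_lt_of_lt_csSup hSne (hTs_def ▸ (hu2 : u < Ts))
          have huS : u ∈ S := by
            refine ⟨⟨hu1.le, (huT.le.trans hTS.1.2)⟩, fun w hw j => ?_⟩
            exact hTS.2 w ⟨hw.1, hw.2.trans huT.le⟩ j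
          exact hquant u huS i
        have htend : Filter.Tendsto (fun t => x t i) (𝓝[<] Ts) (𝓝 (x Ts i)) :=
          ((hcontAt i Ts ⟨hTs_ge, hTs_le⟩).tendsto).mono_left nhdsWithin_le_nhds
        have hlim : m i ≤ x Ts i :=
          ge_of_tendsto htend hev
        rw [heq]
        exact lt_of_lt_of_le (hmpos i) hlim
  -- Ts = t₁
  have hTst : Ts = t₁ := by
    by_contra hne
    have hTlt : Ts < t₁ := lt_of_le_of_ne hTs_le hne
    have hposTs : ∀ i, 0 < x Ts i := fun i => hTsS.2 Ts ⟨hTs_ge, le_rfl⟩ i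
    have hev : ∀ᶠ u in 𝓝 Ts, ∀ i, 0 < x u i := by
      rw [Filter.eventually_all]
      intro i
      exact (hcontAt i Ts ⟨hTs_ge, hTs_le⟩).eventually_mem
        (Ioi_mem_nhds (hposTs i)) |>.mono (fun u hu => hu)
    obtain ⟨δ, hδ, hball⟩ := Metric.eventually_nhds_iff.1 hev
    obtain ⟨T', hT'1, hT'2, hT'3⟩ : ∃ T', Ts < T' ∧ T' ≤ t₁ ∧ T' - Ts < δ := by
      refine ⟨min (Ts + δ/2) t₁, ?_, min_le_right _ _, ?_⟩
      · exact lt_min (by linarith) hTlt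
      · calc min (Ts + δ/2) t₁ - Ts ≤ (Ts + δ/2) - Ts := by
              have := min_le_left (Ts + δ/2) t₁; linarith
          _ < δ := by linarith
    have hT'S : T' ∈ S := by
      refine ⟨⟨hTs_ge.trans hT'1.le, hT'2⟩, fun s hs i => ?_⟩
      rcases le_or_gt s Ts with h | h
      · exact hTsS.2 s ⟨hs.1, h⟩ i
      · refine hball ?_ i
        rw [Real.dist_eq, abs_of_pos (by linarith : (0:ℝ) < s - Ts)]
        linarith [hs.2]
    have : T' ≤ Ts := hTs_def ▸ le_csSup hSbdd hT'S
    linarith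
  intro s hs i
  exact hTsS.2 s ⟨hs.1, hTst ▸ hs.2⟩ i

set_option maxHeartbeats 1000000 in
/-- Basic Kolotilina-type product estimate for cooperative linear ODE systems. -/
theorem stmt2 {N : ℕ} {α β t₀ : ℝ} (ht₀ : t₀ ∈ Set.Ioo α β)
    (A : ℝ → Matrix (Fin N) (Fin N) ℝ)
    (hint : ∀ i j, MeasureTheory.LocallyIntegrableOn (fun t => A t i j) (Set.Ioo α β))
    (hML : ∀ t ∈ Set.Ioo α β, ∀ i j, i ≠ j → 0 ≤ A t i j)
    (x : ℝ → Fin N → ℝ)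
    (hcont : ∀ i, ContinuousOn (fun t => x t i) (Set.Ioo α β))
    (hsol : ∀ t ∈ Set.Ioo α β, ∀ i,
      x t i = x t₀ i + ∫ τ in t₀..t, ∑ j, A τ i j * x τ j)
    (hpos : ∀ i, 0 < x t₀ i) :
    ∀ t ∈ Set.Ioo t₀ β,
      ∏ i, x t i ≥
        Real.exp (∫ τ in t₀..t,
          (Matrix.trace (A τ) +
            2 * ∑ p ∈ Finset.univ.filter (fun p : Fin N × Fin N => p.1 < p.2),
              Real.sqrt (A τ p.1 p.2 * A τ p.2 p.1))) * ∏ i, x t₀ i := by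
  intro t₁ ht₁
  have h01 : t₀ ≤ t₁ := ht₁.1.le
  have hsub : Icc t₀ t₁ ⊆ Ioo α β := fun s hs =>
    ⟨lt_of_lt_of_le ht₀.1 hs.1, lt_of_le_of_lt hs.2 ht₁.2⟩
  have hAint : ∀ i j, IntegrableOn (fun t => A t i j) (Icc t₀ t₁) := fun i j =>
    (hint i j).integrableOn_compact_subset hsub isCompact_Icc
  have hxcont : ∀ j, ContinuousOn (fun t => x t j) (Icc t₀ t₁) := fun j => (hcont j).mono hsub
  have hxint : ∀ i, IntegrableOn (fun τ => ∑ j, A τ i j * x τ j) (Icc t₀ t₁) := by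
    intro i
    refine integrable_finset_sum _ fun j _ => ?_
    obtain ⟨Cj, hCj⟩ := isCompact_Icc.exists_bound_of_continuousOn (hxcont j)
    have haesm : AEStronglyMeasurable (fun τ => x τ j) (volume.restrict (Icc t₀ t₁)) :=
      (hxcont j).aestronglyMeasurable measurableSet_Icc
    have h1 : IntegrableOn (fun τ => x τ j * A τ i j) (Icc t₀ t₁) :=
      (hAint i j).bdd_mul haesm
        ((ae_restrict_iff' measurableSet_Icc).2 (ae_of_all _ fun τ hτ => hCj τ hτ))
    exact h1.congr_fun (fun τ _ => mul_comm _ _) measurableSet_Icc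
  have hML' : ∀ t ∈ Icc t₀ t₁, ∀ i j, i ≠ j → 0 ≤ A t i j := fun t ht => hML t (hsub ht)
  have hsol' : ∀ t ∈ Icc t₀ t₁, ∀ i,
      x t i = x t₀ i + ∫ τ in t₀..t, ∑ j, A τ i j * x τ j := fun t ht => hsol t (hsub ht)
  have hxpos : ∀ s ∈ Icc t₀ t₁, ∀ i, 0 < x s i :=
    pos_on ht₀ ht₁ hAint hML' hcont hsub hsol' hxint hpos
  have hlogi : ∀ i, Real.log (x t₁ i) - Real.log (x t₀ i)
      = ∫ τ in t₀..t₁, (∑ j, A τ i j * x τ j) / x τ i := fun i =>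
    key_log h01 (hxint i) (fun t ht => hsol' t ht i) (fun t ht => hxpos t ht i)
  have hdivint : ∀ i, IntegrableOn
      (fun τ => (∑ j, A τ i j * x τ j) / x τ i) (Icc t₀ t₁) := fun i =>
    div_integrableOn' h01 (hxint i) (hxcont i) (fun t ht => hxpos t ht i)
  have hdivII : ∀ i, IntervalIntegrable
      (fun τ => (∑ j, A τ i j * x τ j) / x τ i) volume t₀ t₁ := fun i =>
    (intervalIntegrable_iff_integrableOn_Ioc_of_le h01).2
      ((hdivint i).mono_set Ioc_subset_Icc_self)
  have hsum_eq : ∫ τ in t₀..t₁, ∑ i, ((∑ j, A τ i j * x τ j) / x τ i)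
      = ∑ i, ∫ τ in t₀..t₁, (∑ j, A τ i j * x τ j) / x τ i :=
    intervalIntegral.integral_finset_sum
      (f := fun i τ => (∑ j, A τ i j * x τ j) / x τ i) (fun i _ => hdivII i)
  -- integrability of the comparison integrand
  have hsqrt_int : ∀ p : Fin N × Fin N,
      IntegrableOn (fun τ => Real.sqrt (A τ p.1 p.2 * A τ p.2 p.1)) (Icc t₀ t₁) := by
    intro p
    refine Integrable.mono'
      (((hAint p.1 p.2).abs.add (hAint p.2 p.1).abs).div_const 2)
      (Real.continuous_sqrt.comp_aestronglyMeasurable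
        ((hAint p.1 p.2).aestronglyMeasurable.mul (hAint p.2 p.1).aestronglyMeasurable))
      (ae_of_all _ fun τ => ?_)
    rw [Real.norm_eq_abs, abs_of_nonneg (Real.sqrt_nonneg _)]
    have h1 : A τ p.1 p.2 * A τ p.2 p.1 ≤ |A τ p.1 p.2| * |A τ p.2 p.1| := by
      calc A τ p.1 p.2 * A τ p.2 p.1 ≤ |A τ p.1 p.2 * A τ p.2 p.1| := le_abs_self _
        _ = |A τ p.1 p.2| * |A τ p.2 p.1| := abs_mul _ _
    have h2 : Real.sqrt (A τ p.1 p.2 * A τ p.2 p.1)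
        ≤ Real.sqrt (|A τ p.1 p.2| * |A τ p.2 p.1|) := Real.sqrt_le_sqrt h1
    have h3 := two_sqrt_le (abs_nonneg (A τ p.1 p.2)) (abs_nonneg (A τ p.2 p.1))
    simp only [Pi.add_apply]
    linarith
  have htrace_int : IntegrableOn (fun τ => Matrix.trace (A τ)) (Icc t₀ t₁) := by
    have : IntegrableOn (fun τ => ∑ i, A τ i i) (Icc t₀ t₁) :=
      integrable_finset_sum _ fun i _ => hAint i i
    exact this.congr_fun (fun τ _ => by simp [Matrix.trace, Matrix.diag]) measurableSet_Icc
  have hg_int : IntegrableOn (fun τ => Matrix.trace (A τ) +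
      2 * ∑ p ∈ Finset.univ.filter (fun p : Fin N × Fin N => p.1 < p.2),
        Real.sqrt (A τ p.1 p.2 * A τ p.2 p.1)) (Icc t₀ t₁) := by
    refine htrace_int.add ?_
    have : IntegrableOn (fun τ =>
        ∑ p ∈ Finset.univ.filter (fun p : Fin N × Fin N => p.1 < p.2),
          Real.sqrt (A τ p.1 p.2 * A τ p.2 p.1)) (Icc t₀ t₁) :=
      integrable_finset_sum _ fun p _ => hsqrt_int p
    simpa [mul_comm, IntegrableOn] using this.mul_const 2
  have hg_II : IntervalIntegrable (fun τ => Matrix.trace (A τ) +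
      2 * ∑ p ∈ Finset.univ.filter (fun p : Fin N × Fin N => p.1 < p.2),
        Real.sqrt (A τ p.1 p.2 * A τ p.2 p.1)) volume t₀ t₁ :=
    (intervalIntegrable_iff_integrableOn_Ioc_of_le h01).2
      (hg_int.mono_set Ioc_subset_Icc_self)
  have hsumII : IntervalIntegrable
      (fun τ => ∑ i, ((∑ j, A τ i j * x τ j) / x τ i)) volume t₀ t₁ := by
    have h1 := IntervalIntegrable.sum Finset.univ
      (f := fun i τ => (∑ j, A τ i j * x τ j) / x τ i) (fun i _ => hdivII i)
    simpa [Finset.sum_fn] using h1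
  -- pointwise comparison
  have hpt : ∀ τ ∈ Icc t₀ t₁, Matrix.trace (A τ) +
      2 * ∑ p ∈ Finset.univ.filter (fun p : Fin N × Fin N => p.1 < p.2),
        Real.sqrt (A τ p.1 p.2 * A τ p.2 p.1)
      ≤ ∑ i, ((∑ j, A τ i j * x τ j) / x τ i) := by
    intro τ hτ
    have hxp : ∀ j, 0 < x τ j := hxpos τ hτ
    have e0 : ∀ i, (∑ j, A τ i j * x τ j) / x τ i
        = ∑ j, A τ i j * x τ j / x τ i := fun i => Finset.sum_div _ _ _
    have e1 : ∑ i, ((∑ j, A τ i j * x τ j) / x τ i)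
        = ∑ i, ∑ j, (A τ i j * x τ j / x τ i) := by
      refine Finset.sum_congr rfl fun i _ => e0 i
    rw [e1, sum_sum_split (fun i j => A τ i j * x τ j / x τ i),
      sum_pairs (fun i j => A τ i j * x τ j / x τ i)]
    have ediag : ∑ i, A τ i i * x τ i / x τ i = Matrix.trace (A τ) := by
      have hdd : ∀ i : Fin N, A τ i i * x τ i / x τ i = A τ i i := fun i => by
        rw [mul_div_assoc, div_self (hxp i).ne', mul_one]
      simp only [hdd]
      simp [Matrix.trace, Matrix.diag]
    rw [ediag]
    have hpairs : 2 * ∑ p ∈ Finset.univ.filter (fun p : Fin N × Fin N => p.1 < p.2),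
        Real.sqrt (A τ p.1 p.2 * A τ p.2 p.1)
        ≤ ∑ p ∈ Finset.univ.filter (fun p : Fin N × Fin N => p.1 < p.2),
          (A τ p.1 p.2 * x τ p.2 / x τ p.1 + A τ p.2 p.1 * x τ p.1 / x τ p.2) := by
      rw [Finset.mul_sum]
      refine Finset.sum_le_sum fun p hp => ?_
      simp only [Finset.mem_filter, Finset.mem_univ, true_and] at hp
      have hApq : 0 ≤ A τ p.1 p.2 := hML' τ hτ p.1 p.2 (ne_of_lt hp)
      have hAqp : 0 ≤ A τ p.2 p.1 := hML' τ hτ p.2 p.1 (ne_of_gt hp)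
      have hs : 0 ≤ A τ p.1 p.2 * x τ p.2 / x τ p.1 :=
        div_nonneg (mul_nonneg hApq (hxp p.2).le) (hxp p.1).le
      have ht : 0 ≤ A τ p.2 p.1 * x τ p.1 / x τ p.2 :=
        div_nonneg (mul_nonneg hAqp (hxp p.1).le) (hxp p.2).le
      have hprod : A τ p.1 p.2 * A τ p.2 p.1
          = (A τ p.1 p.2 * x τ p.2 / x τ p.1) * (A τ p.2 p.1 * x τ p.1 / x τ p.2) := by
        field_simp [(hxp p.1).ne', (hxp p.2).ne']
      rw [hprod]
      exact two_sqrt_le hs ht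
    linarith
  have hmono : ∫ τ in t₀..t₁, (Matrix.trace (A τ) +
      2 * ∑ p ∈ Finset.univ.filter (fun p : Fin N × Fin N => p.1 < p.2),
        Real.sqrt (A τ p.1 p.2 * A τ p.2 p.1))
      ≤ ∫ τ in t₀..t₁, ∑ i, ((∑ j, A τ i j * x τ j) / x τ i) :=
    intervalIntegral.integral_mono_on h01 hg_II hsumII hpt
  have h₀ : 0 < ∏ i, x t₀ i := Finset.prod_pos fun i _ => hpos i
  have h₁ : 0 < ∏ i, x t₁ i := Finset.prod_pos fun i _ => hxpos t₁ ⟨h01, le_rfl⟩ i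
  have hfinal : ∫ τ in t₀..t₁, (Matrix.trace (A τ) +
      2 * ∑ p ∈ Finset.univ.filter (fun p : Fin N × Fin N => p.1 < p.2),
        Real.sqrt (A τ p.1 p.2 * A τ p.2 p.1))
      ≤ Real.log (∏ i, x t₁ i) - Real.log (∏ i, x t₀ i) := by
    have hsum_logs : ∑ i, (Real.log (x t₁ i) - Real.log (x t₀ i))
        = Real.log (∏ i, x t₁ i) - Real.log (∏ i, x t₀ i) := by
      rw [Finset.sum_sub_distrib,
        Real.log_prod (fun i _ => (hxpos t₁ ⟨h01, le_rfl⟩ i).ne'),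
        Real.log_prod (fun i _ => (hpos i).ne')]
    calc _ ≤ ∫ τ in t₀..t₁, ∑ i, ((∑ j, A τ i j * x τ j) / x τ i) := hmono
      _ = ∑ i, ∫ τ in t₀..t₁, (∑ j, A τ i j * x τ j) / x τ i := hsum_eq
      _ = ∑ i, (Real.log (x t₁ i) - Real.log (x t₀ i)) :=
          Finset.sum_congr rfl fun i _ => (hlogi i).symm
      _ = _ := hsum_logs
  have hexp := Real.exp_le_exp.2 hfinal
  rw [Real.exp_sub, Real.exp_log h₁, Real.exp_log h₀] at hexp
  rw [ge_iff_le, ← le_div_iff₀ h₀]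
  exact hexp
end

section
/- Let A ∈ ℝ^{N×N} be an ML-matrix. Then the dominant eigenvalue d(A) satisfies d(A) ≥ (1/N)(tr A + 2 ∑_{j<k} √(a_{jk} a_{kj})). -/
open Finset Matrix
open scoped ENNReal NNReal

variable {ι : Type*} [Fintype ι] [DecidableEq ι]

/-- entries of powers of an entrywise-nonnegative matrix are nonnegative -/
lemma powEntry_nonneg {Q : Matrix ι ι ℝ} (hQ : ∀ i j, 0 ≤ Q i j) :
    ∀ (k : ℕ) (i j : ι), 0 ≤ (Q ^ k) i j := by
  intro k
  induction k with
  | zero => intro i j; by_cases h : i = j <;> simp [Matrix.one_apply, h]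
  | succ k ih =>
    intro i j
    rw [pow_succ, Matrix.mul_apply]
    exact Finset.sum_nonneg fun l _ => mul_nonneg (ih i l) (hQ l j)

/-- key combinatorial Cauchy–Schwarz estimate on powers -/
lemma geom_pow_le {Q P : Matrix ι ι ℝ} (hQ : ∀ i j, 0 ≤ Q i j)
    (hP : ∀ i j, P i j = Real.sqrt (Q i j * Q j i)) :
    ∀ (k : ℕ) (i j : ι), (P ^ k) i j ≤ Real.sqrt ((Q ^ k) i j * (Q ^ k) j i) := by
  intro k
  induction k with
  | zero =>
    intro i j
    by_cases h : i = j <;> simp [Matrix.one_apply, h]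
  | succ k ih =>
    intro i j
    have hPpos : ∀ i j, 0 ≤ P i j := fun i j => (hP i j) ▸ Real.sqrt_nonneg _
    have hPk : ∀ i j, 0 ≤ (P ^ k) i j := powEntry_nonneg hPpos k
    rw [pow_succ, Matrix.mul_apply]
    have h1 : ∀ l, (P ^ k) i l * P l j ≤
        Real.sqrt ((Q ^ k) i l * Q l j) * Real.sqrt ((Q ^ k) l i * Q j l) := by
      intro l
      have := mul_le_mul (ih i l) (le_of_eq (hP l j)) (hPpos l j) (Real.sqrt_nonneg _)
      refine this.trans (le_of_eq ?_)
      rw [← Real.sqrt_mul (mul_nonneg (powEntry_nonneg hQ k i l) (powEntry_nonneg hQ k l i)),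
        ← Real.sqrt_mul (mul_nonneg (powEntry_nonneg hQ k i l) (hQ l j))]
      ring_nf
    calc ∑ l, (P ^ k) i l * P l j
        ≤ ∑ l, Real.sqrt ((Q ^ k) i l * Q l j) * Real.sqrt ((Q ^ k) l i * Q j l) :=
          Finset.sum_le_sum fun l _ => h1 l
      _ ≤ Real.sqrt (∑ l, (Q ^ k) i l * Q l j) * Real.sqrt (∑ l, (Q ^ k) l i * Q j l) :=
          Real.sum_sqrt_mul_sqrt_le _
            (fun l => mul_nonneg (powEntry_nonneg hQ k i l) (hQ l j))
            (fun l => mul_nonneg (powEntry_nonneg hQ k l i) (hQ j l))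
      _ = Real.sqrt ((Q ^ (k+1)) i j * (Q ^ (k+1)) j i) := by
          rw [← Real.sqrt_mul (Finset.sum_nonneg fun l _ =>
            mul_nonneg (powEntry_nonneg hQ k i l) (hQ l j))]
          have e2 : (Q ^ (k+1)) j i = ∑ l, (Q ^ k) l i * Q j l := by
            rw [pow_succ', Matrix.mul_apply]
            exact Finset.sum_congr rfl fun l _ => mul_comm _ _
          rw [e2, pow_succ, Matrix.mul_apply]

lemma pow_symm {S : Matrix ι ι ℝ} (hsym : ∀ i j, S i j = S j i) (k : ℕ) (i j : ι) :
    (S ^ k) i j = (S ^ k) j i := by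
  have hT : Sᵀ = S := Matrix.ext fun i j => hsym j i
  conv_lhs => rw [← hT]
  rw [← Matrix.transpose_pow, Matrix.transpose_apply]

lemma rowsum_identity {S : Matrix ι ι ℝ} (hsym : ∀ i j, S i j = S j i) (k : ℕ) :
    ∑ i, ∑ j, (S ^ (2 * k)) i j = ∑ l, (∑ j, (S ^ k) l j) ^ 2 := by
  have h2 : (2 : ℕ) * k = k + k := by ring
  rw [h2, pow_add]
  calc ∑ i, ∑ j, (S ^ k * S ^ k) i j
      = ∑ i, ∑ l, ∑ j, (S ^ k) i l * (S ^ k) l j := by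
        simp only [Matrix.mul_apply]
        exact Finset.sum_congr rfl fun i _ => Finset.sum_comm
    _ = ∑ l, ∑ i, ∑ j, (S ^ k) i l * (S ^ k) l j := Finset.sum_comm
    _ = ∑ l, (∑ i, (S ^ k) i l) * (∑ j, (S ^ k) l j) := by
        exact Finset.sum_congr rfl fun l _ => (Finset.sum_mul_sum _ _ _ _).symm
    _ = ∑ l, (∑ j, (S ^ k) l j) ^ 2 := by
        apply Finset.sum_congr rfl; intro l _
        rw [sq]
        congr 1
        exact Finset.sum_congr rfl fun i _ => pow_symm hsym k i l

lemma trace_identity {S : Matrix ι ι ℝ} (hsym : ∀ i j, S i j = S j i) (k : ℕ) :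
    Matrix.trace (S ^ (2 * k)) = ∑ l, ∑ j, ((S ^ k) l j) ^ 2 := by
  have h2 : (2 : ℕ) * k = k + k := by ring
  rw [h2, pow_add, Matrix.trace]
  apply Finset.sum_congr rfl; intro l _
  rw [Matrix.diag_apply, Matrix.mul_apply]
  apply Finset.sum_congr rfl; intro j _
  rw [sq, pow_symm hsym k j l]

lemma sym_growth {S : Matrix ι ι ℝ} (hsym : ∀ i j, S i j = S j i)
    (hpos : ∀ i j, 0 ≤ S i j) (m : ℕ) :
    (∑ i, ∑ j, S i j) ^ (2 ^ (m + 1)) ≤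
      (Fintype.card ι : ℝ) ^ (2 ^ (m + 1)) * Matrix.trace (S ^ (2 ^ (m + 1))) := by
  set n : ℝ := (Fintype.card ι : ℝ) with hn
  have hn0 : (0:ℝ) ≤ n := Nat.cast_nonneg _
  have hf : ∀ k, (0:ℝ) ≤ ∑ i, ∑ j, (S ^ k) i j :=
    fun k => Finset.sum_nonneg fun i _ => Finset.sum_nonneg fun j _ =>
      powEntry_nonneg hpos k i j
  -- step 1 : (f k)^2 ≤ n * f (2k)
  have step1 : ∀ k, (∑ i, ∑ j, (S ^ k) i j) ^ 2 ≤ n * ∑ i, ∑ j, (S ^ (2 * k)) i j := by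
    intro k
    rw [rowsum_identity hsym k]
    have := sq_sum_le_card_mul_sum_sq
      (s := (Finset.univ : Finset ι)) (f := fun l => ∑ j, (S ^ k) l j)
    simpa [hn] using this
  -- step 2 : f (2k) ≤ n * trace (S^(2k))
  have step2 : ∀ k, (∑ i, ∑ j, (S ^ (2 * k)) i j) ≤ n * Matrix.trace (S ^ (2 * k)) := by
    intro k
    rw [rowsum_identity hsym k, trace_identity hsym k, Finset.mul_sum]
    apply Finset.sum_le_sum; intro l _
    have := sq_sum_le_card_mul_sum_sq
      (s := (Finset.univ : Finset ι)) (f := fun j => (S ^ k) l j)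
    simpa [hn] using this
  -- growth by induction
  have grow : ∀ m : ℕ, (∑ i, ∑ j, S i j) ^ (2 ^ m) ≤
      n ^ (2 ^ m - 1) * ∑ i, ∑ j, (S ^ (2 ^ m)) i j := by
    intro m
    induction m with
    | zero => simp
    | succ m ih =>
      have h1 : (2:ℕ) ^ (m + 1) = 2 ^ m * 2 := by ring
      rw [h1, pow_mul]
      calc ((∑ i, ∑ j, S i j) ^ 2 ^ m) ^ 2
          ≤ (n ^ (2 ^ m - 1) * ∑ i, ∑ j, (S ^ (2 ^ m)) i j) ^ 2 := by
            apply pow_le_pow_left₀ (pow_nonneg ?_ _) ih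
            · have h1' : S = S ^ 1 := (pow_one S).symm
              calc (0:ℝ) ≤ ∑ i, ∑ j, (S ^ 1) i j := hf 1
                _ = ∑ i, ∑ j, S i j := by rw [pow_one]
        _ = n ^ (2 * (2 ^ m - 1)) * (∑ i, ∑ j, (S ^ (2 ^ m)) i j) ^ 2 := by
            rw [mul_pow, ← pow_mul, mul_comm (2 ^ m - 1) 2]
        _ ≤ n ^ (2 * (2 ^ m - 1)) * (n * ∑ i, ∑ j, (S ^ (2 * 2 ^ m)) i j) := by
            apply mul_le_mul_of_nonneg_left (step1 _) (pow_nonneg hn0 _)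
        _ = n ^ (2 ^ m * 2 - 1) * ∑ i, ∑ j, (S ^ (2 ^ m * 2)) i j := by
            have e : 2 * (2 ^ m - 1) + 1 = 2 ^ m * 2 - 1 := by
              have : 1 ≤ 2 ^ m := Nat.one_le_two_pow
              omega
            rw [← mul_assoc, ← pow_succ, e, mul_comm (2:ℕ) (2 ^ m)]
  calc (∑ i, ∑ j, S i j) ^ (2 ^ (m + 1))
      ≤ n ^ (2 ^ (m + 1) - 1) * ∑ i, ∑ j, (S ^ (2 ^ (m + 1))) i j := grow (m + 1)
    _ ≤ n ^ (2 ^ (m + 1) - 1) * (n * Matrix.trace (S ^ (2 * 2 ^ m))) := by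
        apply mul_le_mul_of_nonneg_left ?_ (pow_nonneg hn0 _)
        have h1 : (2:ℕ) ^ (m + 1) = 2 * 2 ^ m := by ring
        rw [h1]; exact step2 _
    _ = n ^ (2 ^ (m + 1)) * Matrix.trace (S ^ (2 ^ (m + 1))) := by
        have h1 : (2:ℕ) ^ (m + 1) = 2 * 2 ^ m := by ring
        rw [h1, ← mul_assoc, ← pow_succ]
        congr 2
        have : 1 ≤ 2 ^ m := Nat.one_le_two_pow
        omega

/-- Bernoulli-type limit argument -/
lemma le_of_pow_growth {g R C : ℝ} (hg : 0 ≤ g) (hR : 0 < R) (n₀ : ℕ)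
    (h : ∀ m : ℕ, n₀ ≤ m → g ^ 2 ^ (m + 1) ≤ C * R ^ 2 ^ (m + 1)) : g ≤ R := by
  by_contra hgt
  push_neg at hgt
  set q := g / R with hq
  have hq1 : 1 < q := (one_lt_div hR).2 hgt
  obtain ⟨k, hk⟩ := exists_nat_gt ((C - 1) / (q - 1))
  have hkC : C - 1 < k * (q - 1) := (div_lt_iff₀ (by linarith)).1 hk
  set m := max k n₀ with hm
  set K := 2 ^ (m + 1) with hK
  have hkK : (k : ℝ) ≤ K := by
    have h1 : k ≤ m + 1 := le_trans (le_max_left k n₀) (Nat.le_succ m)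
    have h2 : m + 1 < 2 ^ (m + 1) := Nat.lt_two_pow_self
    exact_mod_cast le_trans h1 h2.le
  have hqK : q ^ K ≤ C := by
    have := h m (le_max_right k n₀)
    rw [hq, div_pow, div_le_iff₀ (pow_pos hR K)]
    exact this
  have hber : 1 + (K : ℝ) * (q - 1) ≤ q ^ K := by
    have := one_add_mul_le_pow (a := q - 1) (by linarith) K
    simpa using this
  have : C < 1 + (K : ℝ) * (q - 1) := by
    have : (k : ℝ) * (q - 1) ≤ (K : ℝ) * (q - 1) :=
      mul_le_mul_of_nonneg_right hkK (by linarith)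
    linarith
  linarith

attribute [local instance] Matrix.linftyOpNormedRing Matrix.linftyOpNormedAlgebra

lemma entry_norm_le {M : Matrix ι ι ℂ} (i j : ι) : ‖M i j‖ ≤ ‖M‖ := by
  have h : ‖M i j‖₊ ≤ ‖M‖₊ := by
    rw [Matrix.linfty_opNNNorm_def]
    calc ‖M i j‖₊ ≤ ∑ j', ‖M i j'‖₊ :=
          Finset.single_le_sum (f := fun j' => ‖M i j'‖₊) (fun _ _ => zero_le) (Finset.mem_univ j)
      _ ≤ _ := Finset.le_sup (f := fun i => ∑ j', ‖M i j'‖₊) (Finset.mem_univ i)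
  exact h

lemma sum_B_eq {N : ℕ} (A B : Matrix (Fin N) (Fin N) ℝ)
    (hBd : ∀ i, B i i = A i i)
    (hBo : ∀ i j, i ≠ j → B i j = Real.sqrt (A i j * A j i)) :
    ∑ i, ∑ j, B i j = Matrix.trace A +
      2 * ∑ p ∈ Finset.univ.filter (fun p : Fin N × Fin N => p.1 < p.2),
        Real.sqrt (A p.1 p.2 * A p.2 p.1) := by
  classical
  have hsplit : ∑ i, ∑ j, B i j = ∑ p : Fin N × Fin N, B p.1 p.2 := by
    rw [← Finset.univ_product_univ, Finset.sum_product]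
  rw [hsplit]
  have h1 := Finset.sum_filter_add_sum_filter_not Finset.univ
    (fun p : Fin N × Fin N => p.1 = p.2) (fun p => B p.1 p.2)
  have h2 := Finset.sum_filter_add_sum_filter_not
    (Finset.univ.filter (fun p : Fin N × Fin N => ¬p.1 = p.2))
    (fun p : Fin N × Fin N => p.1 < p.2) (fun p => B p.1 p.2)
  have e1 : (Finset.univ.filter (fun p : Fin N × Fin N => ¬p.1 = p.2)).filter
      (fun p => p.1 < p.2) = Finset.univ.filter (fun p : Fin N × Fin N => p.1 < p.2) := by
    rw [Finset.filter_filter]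
    apply Finset.filter_congr
    intro p _
    simp only [Fin.ext_iff, Fin.lt_def]
    constructor
    · exact fun h => h.2
    · intro h; exact ⟨by omega, h⟩
  have e2 : (Finset.univ.filter (fun p : Fin N × Fin N => ¬p.1 = p.2)).filter
      (fun p => ¬p.1 < p.2) = Finset.univ.filter (fun p : Fin N × Fin N => p.2 < p.1) := by
    rw [Finset.filter_filter]
    apply Finset.filter_congr
    intro p _
    simp only [Fin.ext_iff, Fin.lt_def, not_lt]
    omega
  rw [e1, e2] at h2
  -- diagonal part
  have hdiag : ∑ p ∈ Finset.univ.filter (fun p : Fin N × Fin N => p.1 = p.2),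
      B p.1 p.2 = Matrix.trace A := by
    rw [Finset.sum_filter, ← Finset.univ_product_univ, Finset.sum_product]
    simp only [Matrix.trace]
    rw [Finset.sum_congr rfl (fun i _ => Finset.sum_ite_eq Finset.univ i (fun j => B i j))]
    simp [hBd, Matrix.diag_apply]
  -- swap part
  have hswap : ∑ p ∈ Finset.univ.filter (fun p : Fin N × Fin N => p.2 < p.1), B p.1 p.2
      = ∑ p ∈ Finset.univ.filter (fun p : Fin N × Fin N => p.1 < p.2),
          Real.sqrt (A p.1 p.2 * A p.2 p.1) := by
    apply Finset.sum_nbij' (fun p => Prod.swap p) (fun p => Prod.swap p) <;>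
      simp only [Finset.mem_filter, Finset.mem_univ, true_and, Prod.fst_swap, Prod.snd_swap,
        Prod.swap_swap, and_true, implies_true, true_and]
    · intro p hp
      exact hp
    · intro p hp
      exact hp
    · intro p hp
      rw [hBo p.1 p.2 (ne_of_gt hp), mul_comm]
  -- lt part
  have hlt : ∑ p ∈ Finset.univ.filter (fun p : Fin N × Fin N => p.1 < p.2), B p.1 p.2
      = ∑ p ∈ Finset.univ.filter (fun p : Fin N × Fin N => p.1 < p.2),
          Real.sqrt (A p.1 p.2 * A p.2 p.1) :=
    Finset.sum_congr rfl fun p hp => by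
      have := (Finset.mem_filter.1 hp).2
      exact hBo p.1 p.2 (ne_of_lt this)
  rw [← h1, ← h2, hdiag, hswap, hlt]
  ring

set_option maxHeartbeats 1000000 in
/-- Kolotilina's estimate: the dominant eigenvalue of an ML-matrix `A` satisfies
`d(A) ≥ (1/N)(tr A + 2 ∑_{j<k} √(a_{jk} a_{kj}))`. -/
theorem stmt4 {N : ℕ} (A : Matrix (Fin N) (Fin N) ℝ)
    (hML : ∀ i j, i ≠ j → 0 ≤ A i j) (d : ℝ)
    (hd : (d : ℂ) ∈ spectrum ℂ (A.map (fun r => (r : ℂ))))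
    (hdom : ∀ μ ∈ spectrum ℂ (A.map (fun r => (r : ℂ))), μ.re ≤ d) :
    d ≥ (1 / (N : ℝ)) * (Matrix.trace A +
      2 * ∑ p ∈ Finset.univ.filter (fun p : Fin N × Fin N => p.1 < p.2),
        Real.sqrt (A p.1 p.2 * A p.2 p.1)) := by
  classical
  rcases Nat.eq_zero_or_pos N with hN0 | hNpos
  · subst hN0
    exfalso
    haveI : Subsingleton (Matrix (Fin 0) (Fin 0) ℂ) :=
      ⟨fun a b => Matrix.ext (fun i => i.elim0)⟩
    exact (spectrum.mem_iff.mp hd) (isUnit_of_subsingleton _)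
  haveI : Nonempty (Fin N) := ⟨⟨0, hNpos⟩⟩
  haveI : CompleteSpace (Matrix (Fin N) (Fin N) ℂ) := FiniteDimensional.complete ℂ _
  have hNR : (0:ℝ) < N := by exact_mod_cast hNpos
  obtain ⟨Ac, hAc⟩ : ∃ X : Matrix (Fin N) (Fin N) ℂ, X = A.map (fun r => (r : ℂ)) := ⟨_, rfl⟩
  rw [← hAc] at hd hdom
  obtain ⟨M0, hM0⟩ : ∃ x : ℝ, x = ‖Ac‖ := ⟨_, rfl⟩
  have hM0nn : 0 ≤ M0 := hM0 ▸ norm_nonneg _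
  have hspec : ∀ μ ∈ spectrum ℂ Ac, ‖μ‖ ≤ M0 :=
    fun μ hμ => hM0 ▸ spectrum.norm_le_norm_of_mem hμ
  rw [ge_iff_le]
  obtain ⟨W, hW⟩ : ∃ x : ℝ, x = Matrix.trace A +
      2 * ∑ p ∈ Finset.univ.filter (fun p : Fin N × Fin N => p.1 < p.2),
        Real.sqrt (A p.1 p.2 * A p.2 p.1) := ⟨_, rfl⟩
  rw [← hW]
  obtain ⟨w, hw⟩ : ∃ x : ℝ, x = 1 / (N:ℝ) * W := ⟨_, rfl⟩
  rw [← hw]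
  have hWw : W = (N:ℝ) * w := by rw [hw]; field_simp
  -- it suffices to show `w ≤ d + ε` for every positive `ε`
  apply le_of_forall_pos_le_add
  intro ε hε
  obtain ⟨c, hc⟩ : ∃ x : ℝ, x = M0 + M0 ^ 2 / ε + |d| + |w| + ∑ i, |A i i| := ⟨_, rfl⟩
  have habs : ∀ i : Fin N, |A i i| ≤ ∑ i, |A i i| :=
    fun i => Finset.single_le_sum (f := fun i => |A i i|) (fun _ _ => abs_nonneg _)
      (Finset.mem_univ i)
  have hsum0 : (0:ℝ) ≤ ∑ i, |A i i| := Finset.sum_nonneg fun i _ => abs_nonneg _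
  have hMe : (0:ℝ) ≤ M0 ^ 2 / ε := by positivity
  have hc0 : 0 ≤ c := by
    rw [hc]; linarith [abs_nonneg d, abs_nonneg w]
  have hdc : 0 ≤ d + c := by
    rw [hc]; linarith [neg_abs_le d, abs_nonneg w]
  have hdcM : M0 ^ 2 ≤ (d + c) * ε := by
    have h1 : M0 ^ 2 / ε ≤ d + c := by
      rw [hc]; linarith [neg_abs_le d, abs_nonneg w]
    calc M0 ^ 2 = M0 ^ 2 / ε * ε := by field_simp
      _ ≤ (d + c) * ε := mul_le_mul_of_nonneg_right h1 hε.le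
  -- the shifted matrix and its symmetrization
  obtain ⟨Q, hQdef⟩ : ∃ X : Matrix (Fin N) (Fin N) ℝ, X = A + c • 1 := ⟨_, rfl⟩
  have hQentry : ∀ i j, Q i j = if i = j then A i j + c else A i j := by
    intro i j
    rw [hQdef]
    simp only [Matrix.add_apply, Matrix.smul_apply, Matrix.one_apply, smul_eq_mul]
    split <;> ring
  have hQpos : ∀ i j, 0 ≤ Q i j := by
    intro i j
    rw [hQentry]
    split
    · rename_i h
      subst h
      have h1 := habs i
      have h2 := neg_abs_le (A i i)
      rw [hc]; linarith [neg_abs_le d, abs_nonneg w, abs_nonneg d]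
    · exact hML i j (by assumption)
  obtain ⟨B, hBdef⟩ : ∃ X : Matrix (Fin N) (Fin N) ℝ,
      X = Matrix.of (fun i j => if i = j then A i j + c else Real.sqrt (A i j * A j i)) :=
    ⟨_, rfl⟩
  have hBentry : ∀ i j, B i j = if i = j then A i j + c else Real.sqrt (A i j * A j i) := by
    intro i j; rw [hBdef]; rfl
  have hBQ : ∀ i j, B i j = Real.sqrt (Q i j * Q j i) := by
    intro i j
    by_cases h : i = j
    · subst h
      have h0 : 0 ≤ A i i + c := by
        have := hQpos i i
        rwa [hQentry, if_pos rfl] at this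
      rw [hBentry, if_pos rfl, hQentry, if_pos rfl]
      exact (Real.sqrt_mul_self h0).symm
    · rw [hBentry, if_neg h, hQentry i j, if_neg h, hQentry j i, if_neg (Ne.symm h)]
  have hBsym : ∀ i j, B i j = B j i := by
    intro i j
    rw [hBentry, hBentry]
    by_cases h : i = j
    · subst h; rfl
    · rw [if_neg h, if_neg (Ne.symm h), mul_comm]
  have hBpos : ∀ i j, 0 ≤ B i j := fun i j => (hBQ i j) ▸ Real.sqrt_nonneg _
  -- the sum of all entries of B
  have hsumB : ∑ i, ∑ j, B i j = W + c * N := by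
    have hBd : ∀ i, B i i = Q i i := by
      intro i; rw [hBentry, if_pos rfl, hQentry, if_pos rfl]
    have hBo : ∀ i j, i ≠ j → B i j = Real.sqrt (Q i j * Q j i) := fun i j _ => hBQ i j
    rw [sum_B_eq Q B hBd hBo]
    have htr : Matrix.trace Q = Matrix.trace A + c * N := by
      rw [hQdef, Matrix.trace_add, Matrix.trace_smul, Matrix.trace_one]
      simp [smul_eq_mul]
    have hsq : ∑ p ∈ Finset.univ.filter (fun p : Fin N × Fin N => p.1 < p.2),
        Real.sqrt (Q p.1 p.2 * Q p.2 p.1)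
        = ∑ p ∈ Finset.univ.filter (fun p : Fin N × Fin N => p.1 < p.2),
        Real.sqrt (A p.1 p.2 * A p.2 p.1) := by
      apply Finset.sum_congr rfl
      intro p hp
      have hlt := (Finset.mem_filter.1 hp).2
      rw [hQentry, hQentry, if_neg (ne_of_lt hlt), if_neg (ne_of_gt hlt)]
    rw [htr, hsq, hW]
    ring
  -- complex version of Q
  obtain ⟨Qc, hQc⟩ : ∃ X : Matrix (Fin N) (Fin N) ℂ, X = Q.map (fun r => (r : ℂ)) := ⟨_, rfl⟩
  have hmp : ∀ (M : Matrix (Fin N) (Fin N) ℝ) (K : ℕ),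
      (M ^ K).map (fun r => (r : ℂ)) = (M.map (fun r => (r : ℂ))) ^ K := by
    intro M K
    have h := map_pow (Complex.ofRealHom.mapMatrix (m := Fin N)) M K
    exact h
  have hQcAc : Qc = algebraMap ℂ (Matrix (Fin N) (Fin N) ℂ) (c : ℂ) + Ac := by
    rw [hQc, hAc]
    ext i j
    rw [Algebra.algebraMap_eq_smul_one]
    simp only [Matrix.map_apply, Matrix.add_apply, Matrix.smul_apply, Matrix.one_apply,
      smul_eq_mul, hQentry]
    split <;> push_cast <;> ring
  -- bounding the norms of spectrum elements of Qc
  obtain ⟨Rr, hRr⟩ : ∃ x : ℝ, x = d + c + ε / 2 := ⟨_, rfl⟩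
  obtain ⟨Rr2, hRr2⟩ : ∃ x : ℝ, x = d + c + ε := ⟨_, rfl⟩
  have hRr0 : 0 < Rr := by rw [hRr]; linarith
  have hRr20 : 0 < Rr2 := by rw [hRr2]; linarith
  have hRrlt : Rr < Rr2 := by rw [hRr, hRr2]; linarith
  have hspecQ : ∀ z ∈ spectrum ℂ Qc, ‖z‖ ≤ Rr := by
    intro z hz
    rw [hQcAc] at hz
    have hz' : (z - (c:ℂ)) ∈ spectrum ℂ Ac := by
      have he : z = (z - (c:ℂ)) + (c:ℂ) := by ring
      rw [he] at hz
      exact (spectrum.add_mem_add_iff).mp hz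
    have h1 : (z - (c:ℂ)).re ≤ d := hdom _ hz'
    have h2 : ‖z - (c:ℂ)‖ ≤ M0 := hspec _ hz'
    have hre : |(z - (c:ℂ)).re| ≤ M0 := (Complex.abs_re_le_norm _).trans h2
    have him : |(z - (c:ℂ)).im| ≤ M0 := (Complex.abs_im_le_norm _).trans h2
    have hzre : z.re = (z - (c:ℂ)).re + c := by simp
    have hzim : z.im = (z - (c:ℂ)).im := by simp
    have hnz : ‖z‖ ^ 2 = z.re ^ 2 + z.im ^ 2 := by
      rw [← Complex.normSq_eq_norm_sq, Complex.normSq_apply]; ring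
    have hb1 : 0 ≤ z.re := by
      rw [hzre]
      have h3 := neg_abs_le (z - (c:ℂ)).re
      have h4 : M0 ≤ c := by rw [hc]; linarith [abs_nonneg d, abs_nonneg w]
      linarith
    have hb2 : z.re ≤ d + c := by rw [hzre]; linarith
    have him2 : z.im ^ 2 ≤ M0 ^ 2 := by
      rw [hzim]
      calc (z - (c:ℂ)).im ^ 2 = |(z - (c:ℂ)).im| ^ 2 := (sq_abs _).symm
        _ ≤ M0 ^ 2 := by nlinarith [abs_nonneg (z - (c:ℂ)).im]
    have hsq : ‖z‖ ^ 2 ≤ Rr ^ 2 := by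
      have hr2 : z.re ^ 2 ≤ (d + c) ^ 2 := by nlinarith [hb1, hb2]
      have hexp : (d + c + ε / 2) ^ 2 = (d + c) ^ 2 + (d + c) * ε + ε ^ 2 / 4 := by ring
      rw [hnz, hRr, hexp]
      have h6 := sq_nonneg ε
      linarith [hr2, him2, hdcM]
    calc ‖z‖ = Real.sqrt (‖z‖ ^ 2) := (Real.sqrt_sq (norm_nonneg z)).symm
      _ ≤ Real.sqrt (Rr ^ 2) := Real.sqrt_le_sqrt hsq
      _ = Rr := Real.sqrt_sq hRr0.le
  have hrad : spectralRadius ℂ Qc ≤ ENNReal.ofReal Rr := by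
    refine iSup₂_le fun z hz => ?_
    rw [← enorm_eq_nnnorm, ← ofReal_norm]
    exact ENNReal.ofReal_le_ofReal (hspecQ z hz)
  have hlt : spectralRadius ℂ Qc < ENNReal.ofReal Rr2 :=
    lt_of_le_of_lt hrad ((ENNReal.ofReal_lt_ofReal_iff hRr20).mpr hRrlt)
  have hgel := spectrum.pow_nnnorm_pow_one_div_tendsto_nhds_spectralRadius Qc
  have hev : ∀ᶠ n : ℕ in Filter.atTop,
      (‖Qc ^ n‖₊ : ℝ≥0∞) ^ (1 / (n:ℝ)) < ENNReal.ofReal Rr2 :=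
    hgel.eventually_lt_const hlt
  obtain ⟨n₀, hn₀⟩ := Filter.eventually_atTop.mp hev
  have hnormpow : ∀ nn : ℕ, n₀ ≤ nn → 1 ≤ nn → ‖Qc ^ nn‖ ≤ Rr2 ^ nn := by
    intro nn hg1 hg2
    have hx := (hn₀ nn hg1).le
    have hnnne : ((nn:ℝ)) ≠ 0 := by
      have : (0:ℝ) < nn := by exact_mod_cast hg2
      linarith
    have hx2 : (‖Qc ^ nn‖₊ : ℝ≥0∞) ≤ ENNReal.ofReal (Rr2 ^ nn) := by
      calc (‖Qc ^ nn‖₊ : ℝ≥0∞)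
          = ((‖Qc ^ nn‖₊ : ℝ≥0∞) ^ (1 / (nn:ℝ))) ^ (nn:ℝ) := by
            rw [← ENNReal.rpow_mul, one_div_mul_cancel hnnne, ENNReal.rpow_one]
        _ ≤ (ENNReal.ofReal Rr2) ^ (nn:ℝ) :=
            ENNReal.rpow_le_rpow hx (Nat.cast_nonneg nn)
        _ = (ENNReal.ofReal Rr2) ^ nn := ENNReal.rpow_natCast _ nn
        _ = ENNReal.ofReal (Rr2 ^ nn) := (ENNReal.ofReal_pow hRr20.le nn).symm
    have hor : ENNReal.ofReal ‖Qc ^ nn‖ ≤ ENNReal.ofReal (Rr2 ^ nn) := by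
      rw [ofReal_norm, enorm_eq_nnnorm]; exact hx2
    exact (ENNReal.ofReal_le_ofReal_iff (by positivity)).mp hor
  -- trace comparisons
  have htraceBQ : ∀ K, Matrix.trace (B ^ K) ≤ Matrix.trace (Q ^ K) := by
    intro K
    apply Finset.sum_le_sum
    intro i _
    have h := geom_pow_le hQpos hBQ K i i
    rwa [Real.sqrt_mul_self (powEntry_nonneg hQpos K i i)] at h
  have htraceQN : ∀ K, Matrix.trace (Q ^ K) ≤ (N:ℝ) * ‖Qc ^ K‖ := by
    intro K
    have hper : ∀ i : Fin N, (Q ^ K) i i ≤ ‖Qc ^ K‖ := by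
      intro i
      have he : (((Q ^ K) i i : ℝ) : ℂ) = (Qc ^ K) i i := by
        rw [hQc, ← hmp Q K]; rfl
      calc (Q ^ K) i i = ‖(((Q ^ K) i i : ℝ) : ℂ)‖ := by
            rw [Complex.norm_real, Real.norm_eq_abs,
              abs_of_nonneg (powEntry_nonneg hQpos K i i)]
        _ = ‖(Qc ^ K) i i‖ := by rw [he]
        _ ≤ ‖Qc ^ K‖ := entry_norm_le i i
    calc Matrix.trace (Q ^ K) ≤ ∑ _i : Fin N, ‖Qc ^ K‖ :=
          Finset.sum_le_sum fun i _ => hper i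
      _ = (N:ℝ) * ‖Qc ^ K‖ := by
          rw [Finset.sum_const, Finset.card_univ, Fintype.card_fin, nsmul_eq_mul]
  -- the growth estimate
  have hgrow : ∀ m : ℕ, n₀ ≤ m → (w + c) ^ 2 ^ (m + 1) ≤ (N:ℝ) * Rr2 ^ 2 ^ (m + 1) := by
    intro m hm
    have hK1 : 1 ≤ 2 ^ (m + 1) := Nat.one_le_two_pow
    have hKn₀ : n₀ ≤ 2 ^ (m + 1) := by
      have h1 : m + 1 < 2 ^ (m + 1) := Nat.lt_two_pow_self
      omega
    have c1 : ((N:ℝ) * (w + c)) ^ 2 ^ (m + 1) ≤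
        (N:ℝ) ^ 2 ^ (m + 1) * Matrix.trace (B ^ 2 ^ (m + 1)) := by
      have hg := sym_growth hBsym hBpos m
      have hcard : ((Fintype.card (Fin N) : ℝ)) = (N:ℝ) := by simp
      rw [hcard] at hg
      have hsum : ∑ i, ∑ j, B i j = (N:ℝ) * (w + c) := by
        rw [hsumB, hWw]; ring
      rwa [hsum] at hg
    have c2 : (N:ℝ) ^ 2 ^ (m + 1) * Matrix.trace (B ^ 2 ^ (m + 1)) ≤
        (N:ℝ) ^ 2 ^ (m + 1) * ((N:ℝ) * Rr2 ^ 2 ^ (m + 1)) := by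
      apply mul_le_mul_of_nonneg_left _ (pow_nonneg hNR.le _)
      calc Matrix.trace (B ^ 2 ^ (m + 1)) ≤ Matrix.trace (Q ^ 2 ^ (m + 1)) := htraceBQ _
        _ ≤ (N:ℝ) * ‖Qc ^ 2 ^ (m + 1)‖ := htraceQN _
        _ ≤ (N:ℝ) * Rr2 ^ 2 ^ (m + 1) :=
            mul_le_mul_of_nonneg_left (hnormpow _ hKn₀ hK1) hNR.le
    have c3 : ((N:ℝ) * (w + c)) ^ 2 ^ (m + 1) =
        (N:ℝ) ^ 2 ^ (m + 1) * (w + c) ^ 2 ^ (m + 1) := mul_pow _ _ _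
    rw [c3] at c1
    exact le_of_mul_le_mul_left (le_trans c1 c2) (pow_pos hNR _)
  have hwc0 : 0 ≤ w + c := by
    have h5 := neg_abs_le w
    rw [hc]; linarith [abs_nonneg d]
  have hfin := le_of_pow_growth hwc0 hRr20 n₀ hgrow
  rw [hRr2] at hfin
  linarith
end

section
/- Let A ∈ ℝ^{N×N} be an ML-matrix. Then its dominant eigenvalue d(A) satisfies d(A) ≥ minᵢ ∑ⱼ a_{ij} (the minimum over rows of the row sums). -/
set_option maxHeartbeats 1000000

attribute [local instance] Matrix.linftyOpNormedRing Matrix.linftyOpNormedAlgebra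

open Filter

section Aux

variable {N : ℕ} [NeZero N]

lemma rowSumAux_le_norm (M : Matrix (Fin N) (Fin N) ℂ) (i : Fin N) :
    ∑ j, ‖M i j‖ ≤ ‖M‖ := by
  rw [Matrix.linfty_opNorm_def]
  have h := Finset.le_sup (f := fun i => ∑ j, ‖M i j‖₊) (Finset.mem_univ i)
  calc ∑ j, ‖M i j‖ = ((∑ j, ‖M i j‖₊ : NNReal) : ℝ) := by push_cast; rfl
    _ ≤ _ := by exact_mod_cast h

end Aux

/-- Frobenius lower estimate (row version): `d(A) ≥ minᵢ ∑ⱼ a_{ij}` for an ML-matrix. -/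
theorem stmt5 {N : ℕ} [NeZero N] (A : Matrix (Fin N) (Fin N) ℝ)
    (hML : ∀ i j, i ≠ j → 0 ≤ A i j) (d : ℝ)
    (hd : (d : ℂ) ∈ spectrum ℂ (A.map (fun r => (r : ℂ))))
    (hdom : ∀ μ ∈ spectrum ℂ (A.map (fun r => (r : ℂ))), μ.re ≤ d) :
    d ≥ ⨅ i, ∑ j, A i j := by
  classical
  by_contra hcon
  push_neg at hcon
  set m : ℝ := ⨅ i, ∑ j, A i j with hm
  have hrow : ∀ i, m ≤ ∑ j, A i j := fun i =>
    ciInf_le (Set.Finite.bddBelow (Set.finite_range _)) i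
  set η : ℝ := m - d with hηdef
  have hη : 0 < η := by simp only [hηdef]; linarith
  set Aℂ : Matrix (Fin N) (Fin N) ℂ := A.map (fun r => (r : ℂ)) with hAc
  set K : ℝ := ‖Aℂ‖ with hKdef
  have hK0 : 0 ≤ K := norm_nonneg _
  have hq0 : 0 ≤ (K ^ 2 + η ^ 2) / (2 * η) := div_nonneg (by positivity) (by linarith)
  set s : ℝ := 1 + |m| + K + (K ^ 2 + η ^ 2) / (2 * η) with hsdef
  have hs0 : 0 < s := by
    have := abs_nonneg m; simp only [hsdef]; linarith
  have hs1 : m + K ≤ s := by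
    have := le_abs_self m; simp only [hsdef]; linarith
  have hs2 : (s - η) ^ 2 + K ^ 2 < s ^ 2 := by
    have h1 : (K ^ 2 + η ^ 2) / (2 * η) < s := by
      have := abs_nonneg m; simp only [hsdef]; linarith
    have h2 : K ^ 2 + η ^ 2 < 2 * η * s := by
      have h2η : 0 < 2 * η := by linarith
      calc K ^ 2 + η ^ 2 = (K ^ 2 + η ^ 2) / (2 * η) * (2 * η) := by field_simp
        _ < s * (2 * η) := by exact mul_lt_mul_of_pos_right h1 h2η
        _ = 2 * η * s := by ring
    nlinarith
  -- bound on entries of A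
  have hKentry : ∀ i j, |A i j| ≤ K := by
    intro i j
    have h1 : ‖Aℂ i j‖ ≤ ∑ k, ‖Aℂ i k‖ :=
      Finset.single_le_sum (f := fun k => ‖Aℂ i k‖) (fun k _ => norm_nonneg _)
        (Finset.mem_univ j)
    have h2 := rowSumAux_le_norm Aℂ i
    have h3 : ‖Aℂ i j‖ = |A i j| := by
      simp [hAc, Matrix.map_apply, Complex.norm_real, Real.norm_eq_abs]
    linarith [h1.trans h2, le_of_eq h3.symm]
  -- the shifted nonnegative matrix
  set C : Matrix (Fin N) (Fin N) ℝ := A + (s - m) • (1 : Matrix (Fin N) (Fin N) ℝ) with hCdef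
  have hCapply : ∀ i j, C i j = A i j + (s - m) * (if i = j then 1 else 0) := by
    intro i j
    simp [hCdef, Matrix.add_apply, Matrix.smul_apply, Matrix.one_apply]
  have hCnn : ∀ i j, 0 ≤ C i j := by
    intro i j
    rw [hCapply]
    by_cases h : i = j
    · simp only [h, if_true]
      have := (abs_le.1 (hKentry j j)).1
      linarith
    · simp only [h, if_false]
      have := hML i j h
      linarith
  have hCrow : ∀ i, s ≤ ∑ j, C i j := by
    intro i
    have h1 : ∑ j, C i j = (∑ j, A i j) + (s - m) := by
      simp only [hCapply]
      rw [Finset.sum_add_distrib]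
      congr 1
      rw [← Finset.mul_sum]
      simp [Finset.sum_ite_eq' Finset.univ i (fun _ => (1 : ℝ))]
    have := hrow i
    linarith
  -- powers of C have nonnegative entries and row sums ≥ s ^ n
  have hpow : ∀ n : ℕ, (∀ i j, 0 ≤ (C ^ n) i j) ∧ (∀ i, s ^ n ≤ ∑ j, (C ^ n) i j) := by
    intro n
    induction n with
    | zero =>
      constructor
      · intro i j
        simp [Matrix.one_apply]
        split_ifs <;> norm_num
      · intro i
        simp [Matrix.one_apply, Finset.sum_ite_eq' Finset.univ i (fun _ => (1 : ℝ))]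
    | succ n ih =>
      obtain ⟨ihnn, ihrow⟩ := ih
      have happly : ∀ i j, (C ^ (n + 1)) i j = ∑ k, (C ^ n) i k * C k j := by
        intro i j
        rw [pow_succ, Matrix.mul_apply]
      constructor
      · intro i j
        rw [happly]
        exact Finset.sum_nonneg fun k _ => mul_nonneg (ihnn i k) (hCnn k j)
      · intro i
        have h1 : ∑ j, (C ^ (n + 1)) i j = ∑ k, (C ^ n) i k * ∑ j, C k j := by
          simp only [happly]
          rw [Finset.sum_comm]
          congr 1; ext k
          rw [← Finset.mul_sum]
        rw [h1]
        calc (s : ℝ) ^ (n + 1) = s ^ n * s := by ring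
          _ ≤ (∑ k, (C ^ n) i k) * s :=
            mul_le_mul_of_nonneg_right (ihrow i) (le_of_lt hs0)
          _ = ∑ k, (C ^ n) i k * s := by rw [Finset.sum_mul]
          _ ≤ ∑ k, (C ^ n) i k * ∑ j, C k j :=
            Finset.sum_le_sum fun k _ =>
              mul_le_mul_of_nonneg_left (hCrow k) (ihnn i k)
  -- complexification of C
  set Cℂ : Matrix (Fin N) (Fin N) ℂ := C.map (fun r => (r : ℂ)) with hCc
  have hmap : ∀ n : ℕ, Cℂ ^ n = (C ^ n).map (fun r => (r : ℂ)) := by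
    intro n
    have h0 : Cℂ = Complex.ofRealHom.mapMatrix C := rfl
    rw [h0, ← map_pow]
    rfl
  -- norm lower bound for powers
  have hnorm : ∀ n : ℕ, s ^ n ≤ ‖Cℂ ^ n‖ := by
    intro n
    obtain ⟨i⟩ : Nonempty (Fin N) := Fin.pos_iff_nonempty.1 (Nat.pos_of_ne_zero (NeZero.ne N))
    have h1 : ∑ j, ‖(Cℂ ^ n) i j‖ ≤ ‖Cℂ ^ n‖ := rowSumAux_le_norm _ i
    have h2 : ∑ j, ‖(Cℂ ^ n) i j‖ = ∑ j, (C ^ n) i j := by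
      apply Finset.sum_congr rfl
      intro j _
      rw [hmap]
      simp only [Matrix.map_apply, Complex.norm_real, Real.norm_eq_abs]
      exact abs_of_nonneg ((hpow n).1 i j)
    have h3 := (hpow n).2 i
    linarith
  -- the spectrum of Cℂ is the shifted spectrum of Aℂ
  set c : ℂ := ((s - m : ℝ) : ℂ) with hc
  have hCeq : Cℂ = Aℂ + c • (1 : Matrix (Fin N) (Fin N) ℂ) := by
    ext i j
    have h1 : Cℂ i j = ((C i j : ℝ) : ℂ) := rfl
    have h2 : Aℂ i j = ((A i j : ℝ) : ℂ) := rfl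
    rw [Matrix.add_apply, h1, h2, hCapply, Matrix.smul_apply, Matrix.one_apply, smul_eq_mul]
    split_ifs with h
    · rw [hc]; simp only [mul_one]; rw [Complex.ofReal_add]
    · simp only [mul_zero, add_zero]
  have hspec : ∀ z : ℂ, z ∈ spectrum ℂ Cℂ → (z - c) ∈ spectrum ℂ Aℂ := by
    intro z hz
    rw [spectrum.mem_iff] at hz ⊢
    intro hu
    apply hz
    have heq : (algebraMap ℂ (Matrix (Fin N) (Fin N) ℂ)) z - Cℂ
        = (algebraMap ℂ (Matrix (Fin N) (Fin N) ℂ)) (z - c) - Aℂ := by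
      rw [hCeq, map_sub, Algebra.algebraMap_eq_smul_one (A := Matrix (Fin N) (Fin N) ℂ) c]
      abel
    rw [heq]
    exact hu
  -- norm bound on the spectrum of Cℂ
  set θ : ℝ := Real.sqrt ((s - η) ^ 2 + K ^ 2) with hθdef
  have hθ0 : 0 ≤ θ := Real.sqrt_nonneg _
  have hθsq : θ ^ 2 = (s - η) ^ 2 + K ^ 2 := Real.sq_sqrt (by positivity)
  have hθs : θ < s := by nlinarith
  have hzθ : ∀ z ∈ spectrum ℂ Cℂ, ‖z‖ ≤ θ := by
    intro z hz
    have hw := hspec z hz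
    set w : ℂ := z - c with hw'
    have hre : w.re ≤ d := hdom w hw
    have hwK : ‖w‖ ≤ K := spectrum.norm_le_norm_of_mem hw
    have hwre : |w.re| ≤ K := (Complex.abs_re_le_norm w).trans hwK
    have hwim : |w.im| ≤ K := (Complex.abs_im_le_norm w).trans hwK
    have hzre : w.re = z.re - (s - m) := by
      rw [hw', hc, Complex.sub_re, Complex.ofReal_re]
    have hzim : w.im = z.im := by
      rw [hw', hc, Complex.sub_im, Complex.ofReal_im]
      ring
    have hzre0 : 0 ≤ z.re := by
      have h1 := (abs_le.1 hwre).1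
      have h2 : z.re = w.re + (s - m) := by rw [hzre]; ring
      rw [h2]; linarith
    have hzre1 : z.re ≤ s - η := by
      have h2 : z.re = w.re + (s - m) := by rw [hzre]; ring
      rw [h2]
      simp only [hηdef]
      linarith
    have hzn : ‖z‖ ^ 2 = z.re ^ 2 + z.im ^ 2 := by
      rw [Complex.sq_norm, Complex.normSq_apply]
      ring
    have him2 : z.im ^ 2 ≤ K ^ 2 := by
      rw [← hzim]
      nlinarith [abs_nonneg w.im, (abs_le.1 hwim).1, (abs_le.1 hwim).2]
    have hre2 : z.re ^ 2 ≤ (s - η) ^ 2 := by nlinarith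
    have : ‖z‖ ^ 2 ≤ θ ^ 2 := by rw [hzn, hθsq]; linarith
    nlinarith [norm_nonneg z]
  -- spectral radius bounds
  haveI : CompleteSpace (Matrix (Fin N) (Fin N) ℂ) := FiniteDimensional.complete ℂ _
  have hρθ : spectralRadius ℂ Cℂ ≤ (θ.toNNReal : ENNReal) := by
    simp only [spectralRadius]
    refine iSup₂_le fun z hz => ?_
    rw [ENNReal.coe_le_coe, ← NNReal.coe_le_coe, coe_nnnorm, Real.coe_toNNReal _ hθ0]
    exact hzθ z hz
  have hρs : (s.toNNReal : ENNReal) ≤ spectralRadius ℂ Cℂ := by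
    refine ge_of_tendsto (spectrum.pow_nnnorm_pow_one_div_tendsto_nhds_spectralRadius Cℂ) ?_
    filter_upwards [Filter.eventually_ge_atTop 1] with n hn
    have hn0 : (n : ℝ) ≠ 0 := Nat.cast_ne_zero.2 (by omega)
    have h2 : s.toNNReal ^ n ≤ ‖Cℂ ^ n‖₊ := by
      rw [← Real.toNNReal_pow (le_of_lt hs0), ← Real.toNNReal_coe (r := ‖Cℂ ^ n‖₊)]
      exact Real.toNNReal_mono (by simpa using hnorm n)
    have h3 : ((s.toNNReal : ENNReal)) ^ (n : ℕ) ≤ (‖Cℂ ^ n‖₊ : ENNReal) := by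
      rw [← ENNReal.coe_pow]
      exact ENNReal.coe_le_coe.2 h2
    calc (s.toNNReal : ENNReal)
        = (((s.toNNReal : ENNReal)) ^ (n : ℕ)) ^ (1 / (n : ℝ)) := by
          rw [← ENNReal.rpow_natCast, ← ENNReal.rpow_mul,
            mul_one_div_cancel hn0, ENNReal.rpow_one]
      _ ≤ (‖Cℂ ^ n‖₊ : ENNReal) ^ (1 / (n : ℝ)) :=
          ENNReal.rpow_le_rpow h3 (by positivity)
  have hfinal : (s.toNNReal : ENNReal) ≤ (θ.toNNReal : ENNReal) := le_trans hρs hρθ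
  rw [ENNReal.coe_le_coe] at hfinal
  have : s ≤ θ := by
    have := NNReal.coe_le_coe.2 hfinal
    rwa [Real.coe_toNNReal _ (le_of_lt hs0), Real.coe_toNNReal _ hθ0] at this
  linarith
end

section
/- Let A ∈ ℝ^{N×N} be an ML-matrix and let i ≠ j be indices. Then d(A) ≥ (1/2)(a_{ii} + a_{jj}) + √(a_{ij} a_{ji}). -/
open Filter Topology
open scoped NNReal ENNReal

attribute [local instance] Matrix.linftyOpSeminormedAddCommGroup
  Matrix.linftyOpNormedAddCommGroup Matrix.linftyOpNormedSpace
  Matrix.linftyOpSemiNormedRing Matrix.linftyOpNormedRing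
  Matrix.linftyOpNormedAlgebra

/-- Row sums are bounded by the `L∞`-operator norm. -/
lemma aux_row_sum_le_norm {N : ℕ} (B : Matrix (Fin N) (Fin N) ℝ) (l : Fin N) :
    ∑ m, ‖B l m‖ ≤ ‖B‖ := by
  rw [Matrix.linfty_opNorm_def]
  have h : (∑ m, ‖B l m‖₊ : ℝ≥0) ≤ Finset.univ.sup fun i => ∑ j, ‖B i j‖₊ :=
    Finset.le_sup (f := fun i => ∑ j, ‖B i j‖₊) (Finset.mem_univ l)
  calc ∑ m, ‖B l m‖ = ((∑ m, ‖B l m‖₊ : ℝ≥0) : ℝ) := by push_cast; rfl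
    _ ≤ _ := by exact_mod_cast h

/-- The complexification does not change the `L∞`-operator norm. -/
lemma aux_map_norm_eq {N : ℕ} (B : Matrix (Fin N) (Fin N) ℝ) :
    ‖B.map (fun r => (r : ℂ))‖ = ‖B‖ := by
  rw [Matrix.linfty_opNorm_def, Matrix.linfty_opNorm_def]
  congr 1
  refine Finset.sup_congr rfl fun l _ => Finset.sum_congr rfl fun m _ => ?_
  simp [Matrix.map_apply]

set_option maxHeartbeats 1000000 in
/-- Key Perron-Frobenius-type lemma: if a nonnegative vector `x` (not identically zero)
satisfies the subinvariance inequality `lam • x ≤ A * x` componentwise, for an ML-matrix `A`,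
then `lam` is at most the dominant eigenvalue `d`. -/
lemma aux_subinv_le_dominant {N : ℕ} (A : Matrix (Fin N) (Fin N) ℝ)
    (hML : ∀ i j, i ≠ j → 0 ≤ A i j) (d : ℝ)
    (hd : (d : ℂ) ∈ spectrum ℂ (A.map (fun r => (r : ℂ))))
    (hdom : ∀ μ ∈ spectrum ℂ (A.map (fun r => (r : ℂ))), μ.re ≤ d)
    (lam : ℝ) (x : Fin N → ℝ) (hx : ∀ l, 0 ≤ x l) (l0 : Fin N) (hxl0 : 0 < x l0)
    (hsub : ∀ l, lam * x l ≤ A.mulVec x l) : lam ≤ d := by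
  haveI : Nonempty (Fin N) := ⟨l0⟩
  set Ac := A.map (fun r => (r : ℂ)) with hAcdef
  set C := ‖Ac‖ with hCdef
  have hC0 : 0 ≤ C := norm_nonneg _
  have hdC : |d| ≤ C := by
    have := spectrum.norm_le_norm_of_mem hd
    simpa using this
  -- the key step, for every sufficiently large shift `t`
  have key : ∀ t : ℝ, C ≤ t → -lam ≤ t → (∀ l, -A l l ≤ t) →
      (lam + t) ^ 2 ≤ (d + t) ^ 2 + C ^ 2 := by
    intro t htC htlam htdiag
    set M : Matrix (Fin N) (Fin N) ℝ := A + t • (1 : Matrix (Fin N) (Fin N) ℝ) with hMdef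
    have hL0 : 0 ≤ lam + t := by linarith
    have hMnn : ∀ l m, 0 ≤ M l m := by
      intro l m
      by_cases h : l = m
      · subst h
        simp only [hMdef, Matrix.add_apply, Matrix.smul_apply, Matrix.one_apply_eq,
          smul_eq_mul, mul_one]
        linarith [htdiag l]
      · simp only [hMdef, Matrix.add_apply, Matrix.smul_apply, Matrix.one_apply_ne h,
          smul_eq_mul, mul_zero, add_zero]
        exact hML l m h
    have hMsub : ∀ l, (lam + t) * x l ≤ M.mulVec x l := by
      intro l
      have hmv : M.mulVec x = A.mulVec x + t • x := by
        rw [hMdef, Matrix.add_mulVec, Matrix.smul_mulVec, Matrix.one_mulVec]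
      rw [hmv]
      simp only [Pi.add_apply, Pi.smul_apply, smul_eq_mul]
      have := hsub l
      nlinarith [this]
    -- powers
    have hpow : ∀ k : ℕ, (∀ l m, 0 ≤ (M ^ k) l m) ∧
        ∀ l, (lam + t) ^ k * x l ≤ (M ^ k).mulVec x l := by
      intro k
      induction k with
      | zero =>
        constructor
        · intro l m
          rw [pow_zero]
          by_cases h : l = m
          · subst h; simp [Matrix.one_apply_eq]
          · simp [Matrix.one_apply_ne h]
        · intro l
          rw [pow_zero, pow_zero, Matrix.one_mulVec, one_mul]
      | succ k ih =>
        constructor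
        · intro l m
          rw [pow_succ, Matrix.mul_apply]
          exact Finset.sum_nonneg fun p _ => mul_nonneg (ih.1 l p) (hMnn p m)
        · intro l
          have hstep : (M ^ (k + 1)).mulVec x = M.mulVec ((M ^ k).mulVec x) := by
            rw [pow_succ', Matrix.mulVec_mulVec]
          rw [hstep]
          have hLk : (0:ℝ) ≤ (lam + t) ^ k := pow_nonneg hL0 k
          calc (lam + t) ^ (k + 1) * x l = (lam + t) ^ k * ((lam + t) * x l) := by ring
            _ ≤ (lam + t) ^ k * M.mulVec x l :=
                mul_le_mul_of_nonneg_left (hMsub l) hLk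
            _ = ∑ m, M l m * ((lam + t) ^ k * x m) := by
                simp only [Matrix.mulVec, dotProduct, Finset.mul_sum]
                refine Finset.sum_congr rfl fun m _ => by ring
            _ ≤ ∑ m, M l m * ((M ^ k).mulVec x m) :=
                Finset.sum_le_sum fun m _ =>
                  mul_le_mul_of_nonneg_left (ih.2 m) (hMnn l m)
            _ = M.mulVec ((M ^ k).mulVec x) l := by
                simp only [Matrix.mulVec, dotProduct]
    -- norm bound on powers
    set S : ℝ := ∑ m, x m with hSdef
    have hxS : ∀ m, x m ≤ S := fun m =>
      Finset.single_le_sum (fun i _ => hx i) (Finset.mem_univ m)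
    have hS0 : 0 < S := lt_of_lt_of_le hxl0 (hxS l0)
    set K : ℝ := S / x l0 with hKdef
    have hK0 : 0 < K := div_pos hS0 hxl0
    have hLk : ∀ k : ℕ, (lam + t) ^ k ≤ ‖M ^ k‖ * K := by
      intro k
      have h1 : (lam + t) ^ k * x l0 ≤ ‖M ^ k‖ * S := by
        calc (lam + t) ^ k * x l0 ≤ (M ^ k).mulVec x l0 := (hpow k).2 l0
          _ = ∑ m, (M ^ k) l0 m * x m := by
              simp only [Matrix.mulVec, dotProduct]
          _ ≤ ∑ m, (M ^ k) l0 m * S :=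
              Finset.sum_le_sum fun m _ =>
                mul_le_mul_of_nonneg_left (hxS m) ((hpow k).1 l0 m)
          _ = (∑ m, (M ^ k) l0 m) * S := by rw [Finset.sum_mul]
          _ ≤ ‖M ^ k‖ * S := by
              refine mul_le_mul_of_nonneg_right ?_ hS0.le
              calc ∑ m, (M ^ k) l0 m = ∑ m, ‖(M ^ k) l0 m‖ :=
                    Finset.sum_congr rfl fun m _ =>
                      (Real.norm_of_nonneg ((hpow k).1 l0 m)).symm
                _ ≤ ‖M ^ k‖ := aux_row_sum_le_norm _ _
      rw [hKdef, ← mul_div_assoc, le_div_iff₀ hxl0]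
      exact h1
    -- complexification and Gelfand's formula
    set Mc : Matrix (Fin N) (Fin N) ℂ := M.map (fun r => (r : ℂ)) with hMcdef
    have hmapM : ∀ k : ℕ, Mc ^ k = (M ^ k).map (fun r => (r : ℂ)) := by
      intro k
      have hcoe : ∀ B : Matrix (Fin N) (Fin N) ℝ,
          B.map (fun r => (r : ℂ)) = (algebraMap ℝ ℂ).mapMatrix B := by
        intro B; ext l m; simp [Matrix.map_apply]
      rw [hMcdef, hcoe, hcoe, ← map_pow]
    have hnormMc : ∀ k : ℕ, ‖Mc ^ k‖ = ‖M ^ k‖ := by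
      intro k; rw [hmapM k]; exact aux_map_norm_eq _
    set ρ := spectralRadius ℂ Mc with hρdef
    have hρfin : ρ ≠ ⊤ :=
      ((spectrum.spectralRadius_le_nnnorm (𝕜 := ℂ) Mc).trans_lt ENNReal.coe_lt_top).ne
    set r := ρ.toReal with hrdef
    have hw : Tendsto (fun n : ℕ => ‖Mc ^ n‖ ^ (1 / (n : ℝ))) atTop (𝓝 r) := by
      have h1 := spectrum.pow_norm_pow_one_div_tendsto_nhds_spectralRadius Mc
      have h2 := (ENNReal.tendsto_toReal hρfin).comp h1
      have h3 : (fun n : ℕ => (ENNReal.ofReal (‖Mc ^ n‖ ^ (1 / (n : ℝ)))).toReal)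
          = fun n : ℕ => ‖Mc ^ n‖ ^ (1 / (n : ℝ)) := by
        funext n
        exact ENNReal.toReal_ofReal (Real.rpow_nonneg (norm_nonneg _) _)
      rw [show ((fun (x : ℝ≥0∞) => x.toReal) ∘ fun n : ℕ =>
        ENNReal.ofReal (‖Mc ^ n‖ ^ (1 / (n : ℝ)))) = fun n : ℕ =>
          (ENNReal.ofReal (‖Mc ^ n‖ ^ (1 / (n : ℝ)))).toReal from rfl, h3] at h2
      exact h2
    have hKt : Tendsto (fun n : ℕ => K ^ (1 / (n : ℝ))) atTop (𝓝 1) := by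
      have h0 : Tendsto (fun n : ℕ => 1 / (n : ℝ)) atTop (𝓝 0) :=
        tendsto_one_div_atTop_nhds_zero_nat
      have := (tendsto_const_nhds (x := K) (f := atTop (α := ℕ))).rpow h0
        (Or.inl (ne_of_gt hK0))
      simpa using this
    have hmul : Tendsto (fun n : ℕ => ‖Mc ^ n‖ ^ (1 / (n : ℝ)) * K ^ (1 / (n : ℝ)))
        atTop (𝓝 r) := by
      have := hw.mul hKt
      simpa using this
    have hLr : lam + t ≤ r := by
      refine ge_of_tendsto hmul ?_
      filter_upwards [eventually_ge_atTop 1] with n hn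
      have hn0 : (n : ℝ) ≠ 0 := Nat.cast_ne_zero.mpr (by omega)
      have h1 : (lam + t) ^ n ≤ ‖Mc ^ n‖ * K := by rw [hnormMc]; exact hLk n
      calc lam + t = ((lam + t) ^ n) ^ (1 / (n : ℝ)) := by
            rw [← Real.rpow_natCast (lam + t) n, ← Real.rpow_mul hL0,
              mul_one_div_cancel hn0, Real.rpow_one]
        _ ≤ (‖Mc ^ n‖ * K) ^ (1 / (n : ℝ)) :=
            Real.rpow_le_rpow (pow_nonneg hL0 n) h1 (by positivity)
        _ = ‖Mc ^ n‖ ^ (1 / (n : ℝ)) * K ^ (1 / (n : ℝ)) :=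
            Real.mul_rpow (norm_nonneg _) hK0.le
    -- upper bound for the spectral radius
    have hup : ρ ≤ ENNReal.ofReal (Real.sqrt ((d + t) ^ 2 + C ^ 2)) := by
      rw [hρdef]
      show (⨆ μ ∈ spectrum ℂ Mc, (‖μ‖₊ : ℝ≥0∞)) ≤ _
      refine iSup₂_le fun μ hμ => ?_
      have hMceq : Mc = Ac + algebraMap ℂ _ (t : ℂ) := by
        rw [Algebra.algebraMap_eq_smul_one]
        ext l m
        by_cases h : l = m
        · subst h
          simp [hMcdef, hMdef, hAcdef, Matrix.map_apply, Matrix.add_apply,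
            Matrix.smul_apply, Matrix.one_apply_eq]
        · simp [hMcdef, hMdef, hAcdef, Matrix.map_apply, Matrix.add_apply,
            Matrix.smul_apply, Matrix.one_apply_ne h]
      have hν : (μ - (t : ℂ)) ∈ spectrum ℂ Ac := by
        rw [spectrum.mem_iff] at hμ ⊢
        have heq : algebraMap ℂ _ (μ - (t : ℂ)) - Ac = algebraMap ℂ _ μ - Mc := by
          rw [map_sub, hMceq]
          abel
        rw [heq]
        exact hμ
      have h1 : (μ - (t : ℂ)).re ≤ d := hdom _ hν
      have h2 : ‖μ - (t : ℂ)‖ ≤ C := spectrum.norm_le_norm_of_mem hν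
      have hre : μ.re - t ≤ d := by
        simpa [Complex.sub_re, Complex.ofReal_re] using h1
      have h2' : ‖μ - (t : ℂ)‖ ≤ C := by
        simpa using h2
      have hre2 : |μ.re - t| ≤ C := by
        have := (Complex.abs_re_le_norm (μ - (t : ℂ))).trans h2'
        simpa [Complex.sub_re, Complex.ofReal_re] using this
      have him : |μ.im| ≤ C := by
        have := (Complex.abs_im_le_norm (μ - (t : ℂ))).trans h2'
        simpa [Complex.sub_im, Complex.ofReal_im] using this
      have hnorm : ‖μ‖ ≤ Real.sqrt ((d + t) ^ 2 + C ^ 2) := by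
        rw [Complex.norm_def]
        refine Real.sqrt_le_sqrt ?_
        rw [Complex.normSq_apply]
        have h3 := abs_le.mp hre2
        have h4 := abs_le.mp him
        have h5 := abs_le.mp hdC
        nlinarith [h3.1, h3.2, h4.1, h4.2, h5.1, h5.2, htC]
      calc (‖μ‖₊ : ℝ≥0∞) = ENNReal.ofReal ‖μ‖ := (ofReal_norm μ).symm
        _ ≤ _ := ENNReal.ofReal_le_ofReal hnorm
    have hrR : r ≤ Real.sqrt ((d + t) ^ 2 + C ^ 2) :=
      ENNReal.toReal_le_of_le_ofReal (Real.sqrt_nonneg _) hup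
    have hfinal : lam + t ≤ Real.sqrt ((d + t) ^ 2 + C ^ 2) := hLr.trans hrR
    have hsq : Real.sqrt ((d + t) ^ 2 + C ^ 2) ^ 2 = (d + t) ^ 2 + C ^ 2 :=
      Real.sq_sqrt (by positivity)
    nlinarith [hfinal, hL0, Real.sqrt_nonneg ((d + t) ^ 2 + C ^ 2)]
  -- conclude by letting `t → ∞`
  by_contra hcon
  push_neg at hcon
  set t0 : ℝ := C + |lam| + (∑ l, |A l l|) + |d| with ht0def
  have hsumabs : ∀ l : Fin N, |A l l| ≤ ∑ m, |A m m| := fun l =>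
    Finset.single_le_sum (f := fun m => |A m m|) (fun m _ => abs_nonneg _) (Finset.mem_univ l)
  have hsum0 : 0 ≤ ∑ m, |A m m| := Finset.sum_nonneg fun m _ => abs_nonneg _
  have heps : 0 < lam - d := sub_pos.mpr hcon
  set T : ℝ := t0 + (C ^ 2 + 1) / (2 * (lam - d)) with hTdef
  have hextra : 0 ≤ (C ^ 2 + 1) / (2 * (lam - d)) := by positivity
  have ht0T : t0 ≤ T := by rw [hTdef]; linarith
  have hCT : C ≤ T := by
    have : C ≤ t0 := by rw [ht0def]; have := abs_nonneg lam; have := abs_nonneg d; linarith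
    linarith
  have hlamT : -lam ≤ T := by
    have : -lam ≤ |lam| := neg_le_abs lam
    have h2 : |lam| ≤ t0 := by rw [ht0def]; have := abs_nonneg d; linarith
    linarith
  have hdiagT : ∀ l, -A l l ≤ T := by
    intro l
    have h1 : -A l l ≤ |A l l| := neg_le_abs _
    have h2 := hsumabs l
    have : |A l l| ≤ t0 := by rw [ht0def]; have := abs_nonneg lam; have := abs_nonneg d; linarith
    linarith
  have hkey := key T hCT hlamT hdiagT
  have hfield : (lam - d) * ((C ^ 2 + 1) / (2 * (lam - d))) = (C ^ 2 + 1) / 2 := by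
    field_simp
  have hlamt0 : 0 ≤ lam + t0 := by
    have : -lam ≤ |lam| := neg_le_abs lam
    rw [ht0def]; have := abs_nonneg d; linarith
  have hdt0 : 0 ≤ d + t0 := by
    have : -d ≤ |d| := neg_le_abs d
    rw [ht0def]; have := abs_nonneg lam; linarith
  have hTexp : (lam + T) ^ 2 - (d + T) ^ 2
      = (lam - d) * (lam + t0) + (lam - d) * (d + t0)
        + 2 * ((lam - d) * ((C ^ 2 + 1) / (2 * (lam - d)))) := by
    rw [hTdef]; ring
  have h9 : (lam + T) ^ 2 - (d + T) ^ 2 ≥ C ^ 2 + 1 := by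
    rw [hTexp, hfield]
    nlinarith [mul_nonneg heps.le hlamt0, mul_nonneg heps.le hdt0]
  linarith [hkey, h9]

/-- Two-index specialization of Kolotilina's estimate:
`d(A) ≥ (1/2)(a_{ii} + a_{jj}) + √(a_{ij} a_{ji})` for an ML-matrix. -/
theorem stmt7 {N : ℕ} (A : Matrix (Fin N) (Fin N) ℝ)
    (hML : ∀ i j, i ≠ j → 0 ≤ A i j) (i j : Fin N) (hij : i ≠ j) (d : ℝ)
    (hd : (d : ℂ) ∈ spectrum ℂ (A.map (fun r => (r : ℂ))))
    (hdom : ∀ μ ∈ spectrum ℂ (A.map (fun r => (r : ℂ))), μ.re ≤ d) :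
    d ≥ (1 / 2) * (A i i + A j j) + Real.sqrt (A i j * A j i) := by
  set a := A i i with ha
  set e := A j j with he
  set b := A i j with hb
  set c := A j i with hc
  have hb0 : 0 ≤ b := hML i j hij
  have hc0 : 0 ≤ c := hML j i (Ne.symm hij)
  have hbc0 : 0 ≤ b * c := mul_nonneg hb0 hc0
  set q : ℝ := Real.sqrt ((a - e) ^ 2 / 4 + b * c) with hq
  have hq0 : 0 ≤ q := Real.sqrt_nonneg _
  have hq2 : q ^ 2 = (a - e) ^ 2 / 4 + b * c := Real.sq_sqrt (by positivity)
  set lamstar : ℝ := (a + e) / 2 + q with hlam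
  have hgq : Real.sqrt (b * c) ≤ q := Real.sqrt_le_sqrt (by nlinarith [sq_nonneg (a - e)])
  -- it suffices to prove `lamstar ≤ d`
  suffices hls : lamstar ≤ d by
    have h2 : (1 / 2) * (a + e) + Real.sqrt (b * c) ≤ lamstar := by
      rw [hlam]; linarith
    exact h2.trans hls
  -- helper for `mulVec` of vectors supported on `{i, j}`
  have hmv : ∀ y : Fin N → ℝ, (∀ m, m ≠ i → m ≠ j → y m = 0) →
      ∀ l, A.mulVec y l = A l i * y i + A l j * y j := by
    intro y hy l
    show (∑ m, A l m * y m) = _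
    rw [← Finset.sum_subset (Finset.subset_univ ({i, j} : Finset (Fin N)))
      (fun m _ hm => ?_)]
    · rw [Finset.sum_pair hij]
    · simp only [Finset.mem_insert, Finset.mem_singleton, not_or] at hm
      rw [hy m hm.1 hm.2, mul_zero]
  rcases eq_or_lt_of_le hb0 with hbz | hbpos
  · -- case `b = 0`
    have hbz' : b = 0 := hbz.symm
    rcases le_or_gt e a with hae | hea
    · -- `a ≥ e`, use the indicator of `i`, and `lamstar = a`
      have hqval : q = (a - e) / 2 := by
        rw [hq, hbz', zero_mul, add_zero,
          show (a - e) ^ 2 / 4 = ((a - e) / 2) ^ 2 by ring]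
        exact Real.sqrt_sq (by linarith)
      have hlama : lamstar = a := by rw [hlam, hqval]; ring
      set x : Fin N → ℝ := fun m => if m = i then 1 else 0 with hx
      have hx1 : x i = 1 := by simp [hx]
      have hx2 : x j = 0 := by simp [hx, Ne.symm hij]
      have hxsupp : ∀ m, m ≠ i → m ≠ j → x m = 0 := by
        intro m h1 _; simp [hx, h1]
      refine aux_subinv_le_dominant A hML d hd hdom lamstar x ?_ i ?_ ?_
      · intro l; by_cases h : l = i <;> simp [hx, h]
      · rw [hx1]; exact one_pos
      · intro l
        rw [hmv x hxsupp l, hx1, hx2, mul_one, mul_zero, add_zero]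
        by_cases h : l = i
        · subst h
          rw [hx1, mul_one, hlama, ha]
        · have hxl : x l = 0 := by simp [hx, h]
          rw [hxl, mul_zero]
          exact hML l i h
    · -- `e > a`, use the indicator of `j`, and `lamstar = e`
      have hqval : q = (e - a) / 2 := by
        rw [hq, hbz', zero_mul, add_zero,
          show (a - e) ^ 2 / 4 = ((e - a) / 2) ^ 2 by ring]
        exact Real.sqrt_sq (by linarith)
      have hlame : lamstar = e := by rw [hlam, hqval]; ring
      set x : Fin N → ℝ := fun m => if m = j then 1 else 0 with hx
      have hx1 : x j = 1 := by simp [hx]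
      have hx2 : x i = 0 := by simp [hx, hij]
      have hxsupp : ∀ m, m ≠ i → m ≠ j → x m = 0 := by
        intro m _ h2; simp [hx, h2]
      refine aux_subinv_le_dominant A hML d hd hdom lamstar x ?_ j ?_ ?_
      · intro l; by_cases h : l = j <;> simp [hx, h]
      · rw [hx1]; exact one_pos
      · intro l
        rw [hmv x hxsupp l, hx1, hx2, mul_one, mul_zero, zero_add]
        by_cases h : l = j
        · subst h
          rw [hx1, mul_one, hlame, he]
        · have hxl : x l = 0 := by simp [hx, h]
          rw [hxl, mul_zero]
          exact hML l j h
  · -- case `b > 0`: use the eigenvector `(b, lamstar - a)` of the 2×2 block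
    have hqa : (a - e) / 2 ≤ q := by
      nlinarith [hq2, hq0, hbc0]
    have hxj0 : 0 ≤ lamstar - a := by rw [hlam]; linarith
    set x : Fin N → ℝ := fun m => if m = i then b else if m = j then lamstar - a else 0
      with hx
    have hxi : x i = b := by simp [hx]
    have hxj : x j = lamstar - a := by simp [hx, Ne.symm hij]
    have hxsupp : ∀ m, m ≠ i → m ≠ j → x m = 0 := by
      intro m h1 h2; simp [hx, h1, h2]
    refine aux_subinv_le_dominant A hML d hd hdom lamstar x ?_ i ?_ ?_
    · intro l
      by_cases h1 : l = i
      · subst h1; rw [hxi]; exact hb0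
      · by_cases h2 : l = j
        · subst h2; rw [hxj]; exact hxj0
        · rw [hxsupp l h1 h2]
    · rw [hxi]; exact hbpos
    · intro l
      rw [hmv x hxsupp l, hxi, hxj]
      by_cases h1 : l = i
      · subst h1
        rw [hxi, ← ha, ← hb]
        have heq1 : a * b + b * (lamstar - a) = lamstar * b := by ring
        linarith
      · by_cases h2 : l = j
        · subst h2
          rw [hxj, ← hc, ← he]
          have heq2 : lamstar * (lamstar - a) = c * b + e * (lamstar - a) := by
            rw [hlam]; linear_combination hq2
          linarith
        · rw [hxsupp l h1 h2, mul_zero]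
          have h3 := hML l i h1
          have h4 := hML l j h2
          positivity
end

section
/- Let A ∈ ℝ^{N×N} be an ML-matrix. Then for all t ≥ 0, the matrix exponential e^{tA} has all entries nonnegative; moreover e^{tA} maps vectors with all coordinates strictly positive to vectors with all coordinates strictly positive. -/
open NormedSpace

/-- Row-sum bound for powers of a matrix. -/
lemma rowsum_pow_le {N : ℕ} (B : Matrix (Fin N) (Fin N) ℝ) (C : ℝ) (hC0 : 0 ≤ C)
    (hC : ∀ i, ∑ j, |B i j| ≤ C) (n : ℕ) (i : Fin N) :
    ∑ j, |(B ^ n) i j| ≤ C ^ n := by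
  induction n generalizing i with
  | zero =>
    simp only [pow_zero]
    have : ∑ j, |(1 : Matrix (Fin N) (Fin N) ℝ) i j| = 1 := by
      rw [Finset.sum_eq_single i]
      · simp [Matrix.one_apply_eq]
      · intro j _ hj
        simp [Matrix.one_apply_ne' hj]
      · simp
    rw [this]
  | succ n ih =>
    calc ∑ j, |(B ^ (n + 1)) i j|
        = ∑ j, |∑ k, B i k * (B ^ n) k j| := by
          simp [pow_succ', Matrix.mul_apply]
      _ ≤ ∑ j, ∑ k, |B i k * (B ^ n) k j| := by
          apply Finset.sum_le_sum
          intro j _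
          exact Finset.abs_sum_le_sum_abs _ _
      _ = ∑ k, ∑ j, |B i k| * |(B ^ n) k j| := by
          rw [Finset.sum_comm]
          simp [abs_mul]
      _ = ∑ k, |B i k| * ∑ j, |(B ^ n) k j| := by
          simp [Finset.mul_sum]
      _ ≤ ∑ k, |B i k| * C ^ n := by
          apply Finset.sum_le_sum
          intro k _
          exact mul_le_mul_of_nonneg_left (ih k) (abs_nonneg _)
      _ = (∑ k, |B i k|) * C ^ n := by rw [Finset.sum_mul]
      _ ≤ C * C ^ n := mul_le_mul_of_nonneg_right (hC i) (pow_nonneg hC0 n)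
      _ = C ^ (n + 1) := (pow_succ' C n).symm

/-- Each entry-series of the matrix exponential series is summable. -/
lemma entry_summable {N : ℕ} (B : Matrix (Fin N) (Fin N) ℝ) (i j : Fin N) :
    Summable (fun n : ℕ => ((n.factorial : ℝ))⁻¹ * (B ^ n) i j) := by
  set C : ℝ := ∑ k, ∑ l, |B k l| with hCdef
  have hC0 : 0 ≤ C := Finset.sum_nonneg fun k _ => Finset.sum_nonneg fun l _ => abs_nonneg _
  have hC : ∀ i, ∑ j, |B i j| ≤ C := by
    intro i
    exact Finset.single_le_sum (f := fun k => ∑ l, |B k l|)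
      (fun k _ => Finset.sum_nonneg fun l _ => abs_nonneg _) (Finset.mem_univ i)
  apply Summable.of_abs
  refine Summable.of_nonneg_of_le (fun n => abs_nonneg _) (fun n => ?_)
    (Real.summable_pow_div_factorial C)
  rw [abs_mul, abs_inv, abs_of_nonneg (by positivity : (0:ℝ) ≤ (n.factorial : ℝ)), div_eq_inv_mul]
  apply mul_le_mul_of_nonneg_left _ (by positivity)
  calc |(B ^ n) i j| ≤ ∑ l, |(B ^ n) i l| :=
        Finset.single_le_sum (f := fun l => |(B ^ n) i l|)
          (fun l _ => abs_nonneg _) (Finset.mem_univ j)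
    _ ≤ C ^ n := rowsum_pow_le B C hC0 hC n i

/-- Entry-wise formula for the matrix exponential. -/
lemma exp_entry_hasSum {N : ℕ} (B : Matrix (Fin N) (Fin N) ℝ) (i j : Fin N) :
    HasSum (fun n : ℕ => ((n.factorial : ℝ))⁻¹ * (B ^ n) i j) (exp B i j) := by
  have hsum : HasSum (fun n : ℕ => ((n.factorial : ℝ))⁻¹ • B ^ n)
      (Matrix.of fun i j => ∑' n : ℕ, ((n.factorial : ℝ))⁻¹ * (B ^ n) i j) := by
    refine Pi.hasSum.2 ?_
    intro i
    rw [Pi.hasSum]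
    intro j
    exact (entry_summable B i j).hasSum
  have : exp B = Matrix.of fun i j => ∑' n : ℕ, ((n.factorial : ℝ))⁻¹ * (B ^ n) i j := by
    rw [exp_eq_tsum ℝ]
    exact hsum.tsum_eq
  rw [this]
  exact (entry_summable B i j).hasSum

/-- Nonnegativity of powers of an entrywise-nonnegative matrix. -/
lemma pow_entry_nonneg {N : ℕ} (B : Matrix (Fin N) (Fin N) ℝ)
    (hB : ∀ i j, 0 ≤ B i j) (n : ℕ) (i j : Fin N) : 0 ≤ (B ^ n) i j := by
  induction n generalizing i j with
  | zero =>
    rw [pow_zero, Matrix.one_apply]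
    split <;> norm_num
  | succ n ih =>
    rw [pow_succ, Matrix.mul_apply]
    exact Finset.sum_nonneg fun k _ => mul_nonneg (ih i k) (hB k j)

/-- For an entrywise-nonnegative matrix, exp has nonnegative entries and diagonal ≥ 1. -/
lemma exp_entries_of_nonneg {N : ℕ} (B : Matrix (Fin N) (Fin N) ℝ)
    (hB : ∀ i j, 0 ≤ B i j) :
    (∀ i j, 0 ≤ exp B i j) ∧ (∀ i, 1 ≤ exp B i i) := by
  have hterm : ∀ (n : ℕ) (i j : Fin N), 0 ≤ ((n.factorial : ℝ))⁻¹ * (B ^ n) i j := by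
    intro n i j
    exact mul_nonneg (by positivity) (pow_entry_nonneg B hB n i j)
  constructor
  · intro i j
    exact (exp_entry_hasSum B i j).nonneg (fun n => hterm n i j)
  · intro i
    have h0 : ((Nat.factorial 0 : ℝ))⁻¹ * (B ^ 0) i i = 1 := by
      simp [Matrix.one_apply_eq]
    calc (1 : ℝ) = ((Nat.factorial 0 : ℝ))⁻¹ * (B ^ 0) i i := h0.symm
      _ ≤ exp B i i :=
        le_hasSum (exp_entry_hasSum B i i) 0 (fun n _ => hterm n i i)

/-- Monotonicity of the flow of a cooperative autonomous linear system: for an ML-matrix `A`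
and `t ≥ 0`, `e^{tA}` is entrywise nonnegative and maps positive vectors to positive vectors. -/
theorem stmt11 {N : ℕ} (A : Matrix (Fin N) (Fin N) ℝ)
    (hML : ∀ i j, i ≠ j → 0 ≤ A i j) :
    ∀ t : ℝ, 0 ≤ t →
      (∀ i j, 0 ≤ NormedSpace.exp (t • A) i j) ∧
      (∀ x₀ : Fin N → ℝ, (∀ i, 0 < x₀ i) →
        ∀ i, 0 < (NormedSpace.exp (t • A)).mulVec x₀ i) := by
  intro t ht
  set c : ℝ := ∑ k, |A k k| with hc
  have hcA : ∀ i : Fin N, |A i i| ≤ c :=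
    fun i => Finset.single_le_sum (f := fun k => |A k k|)
      (fun k _ => abs_nonneg _) (Finset.mem_univ i)
  set B : Matrix (Fin N) (Fin N) ℝ := t • A + (t * c) • (1 : Matrix (Fin N) (Fin N) ℝ)
    with hBdef
  have hB : ∀ i j, 0 ≤ B i j := by
    intro i j
    by_cases h : i = j
    · subst h
      simp only [hBdef, Matrix.add_apply, Matrix.smul_apply, Matrix.one_apply_eq,
        smul_eq_mul, mul_one]
      have h1 : |A i i| ≤ c := hcA i
      have h2 := neg_abs_le (A i i)
      nlinarith
    · simp only [hBdef, Matrix.add_apply, Matrix.smul_apply, Matrix.one_apply_ne h,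
        smul_eq_mul, mul_zero, add_zero]
      exact mul_nonneg ht (hML i j h)
  have hsplit : t • A = (-(t * c)) • (1 : Matrix (Fin N) (Fin N) ℝ) + B := by
    rw [hBdef]; module
  have hexp : exp (t • A) =
      Matrix.diagonal (fun _ : Fin N => Real.exp (-(t * c))) * exp B := by
    rw [hsplit, Matrix.exp_add_of_commute _ _
      (((Commute.one_left B).smul_left _))]
    congr 1
    rw [Matrix.smul_one_eq_diagonal, Matrix.exp_diagonal]
    have : exp (fun _ : Fin N => -(t * c)) = fun _ : Fin N => Real.exp (-(t * c)) := by
      funext k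
      rw [Pi.coe_exp, Real.exp_eq_exp_ℝ]
    rw [this]
  obtain ⟨hnn, hdiag⟩ := exp_entries_of_nonneg B hB
  have hEnn : ∀ i j, 0 ≤ exp (t • A) i j := by
    intro i j
    rw [hexp, Matrix.diagonal_mul]
    exact mul_nonneg (Real.exp_nonneg _) (hnn i j)
  have hEdiag : ∀ i, 0 < exp (t • A) i i := by
    intro i
    rw [hexp, Matrix.diagonal_mul]
    exact mul_pos (Real.exp_pos _) (lt_of_lt_of_le one_pos (hdiag i))
  refine ⟨hEnn, ?_⟩
  intro x₀ hx₀ i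
  rw [Matrix.mulVec, dotProduct]
  apply Finset.sum_pos'
  · intro j _
    exact mul_nonneg (hEnn i j) (hx₀ j).le
  · exact ⟨i, Finset.mem_univ i, mul_pos (hEdiag i) (hx₀ i)⟩
end

section
/- Let A ∈ ℝ^{N×N} be an ML-matrix and x(t) = e^{tA}x₀ with x₀ having all coordinates strictly positive. Then ∏ᵢ xᵢ(t) ≥ exp(t·(tr A + 2 ∑_{j<k} √(a_{jk} a_{kj}))) · ∏ᵢ xᵢ(0) for all t ≥ 0. -/
open NormedSpace
open scoped Nat

namespace Stmt12Aux

variable {N : ℕ}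

/-- Entry of `mulVec` as a linear map in the matrix. -/
def mvLM (x₀ : Fin N → ℝ) (i : Fin N) :
    Matrix (Fin N) (Fin N) ℝ →ₗ[ℝ] ℝ where
  toFun M := M.mulVec x₀ i
  map_add' M M' := by simp [Matrix.add_mulVec]
  map_smul' c M := by simp [Matrix.smul_mulVec]

theorem hasDerivAt_entry (A : Matrix (Fin N) (Fin N) ℝ) (x₀ : Fin N → ℝ) (i : Fin N) (t : ℝ) :
    HasDerivAt (fun s : ℝ => (exp (s • A)).mulVec x₀ i)
      (A.mulVec ((exp (t • A)).mulVec x₀) i) t := by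
  letI : NormedRing (Matrix (Fin N) (Fin N) ℝ) := Matrix.linftyOpNormedRing
  letI : NormedAlgebra ℝ (Matrix (Fin N) (Fin N) ℝ) := Matrix.linftyOpNormedAlgebra
  haveI : CompleteSpace (Matrix (Fin N) (Fin N) ℝ) := FiniteDimensional.complete ℝ _
  have h := hasDerivAt_exp_smul_const' (𝕂 := ℝ) A t
  have hL := (LinearMap.toContinuousLinearMap (mvLM x₀ i)).hasFDerivAt
    (x := exp (t • A))
  have h2 := hL.comp_hasDerivAt t h
  rw [Matrix.mulVec_mulVec]
  exact h2

theorem exp_entry (M : Matrix (Fin N) (Fin N) ℝ) (i j : Fin N) :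
    exp M i j = ∑' n : ℕ, ((n ! : ℝ)⁻¹) * (M ^ n) i j := by
  letI : NormedRing (Matrix (Fin N) (Fin N) ℝ) := Matrix.linftyOpNormedRing
  letI : NormedAlgebra ℝ (Matrix (Fin N) (Fin N) ℝ) := Matrix.linftyOpNormedAlgebra
  haveI : CompleteSpace (Matrix (Fin N) (Fin N) ℝ) := FiniteDimensional.complete ℝ _
  have hsum : Summable (fun n : ℕ => ((n ! : ℝ)⁻¹) • M ^ n) :=
    expSeries_summable' (𝕂 := ℝ) M
  have hexp : exp M = ∑' n : ℕ, ((n ! : ℝ)⁻¹) • M ^ n := by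
    rw [exp_eq_tsum ℝ]
  set L := LinearMap.toContinuousLinearMap (Matrix.entryLinearMap ℝ ℝ i j) with hLdef
  have : L (exp M) = ∑' n : ℕ, L (((n ! : ℝ)⁻¹) • M ^ n) := by
    rw [hexp]; exact L.map_tsum hsum
  exact this

theorem exp_entry_summable (M : Matrix (Fin N) (Fin N) ℝ) (i j : Fin N) :
    Summable (fun n : ℕ => ((n ! : ℝ)⁻¹) * (M ^ n) i j) := by
  letI : NormedRing (Matrix (Fin N) (Fin N) ℝ) := Matrix.linftyOpNormedRing
  letI : NormedAlgebra ℝ (Matrix (Fin N) (Fin N) ℝ) := Matrix.linftyOpNormedAlgebra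
  haveI : CompleteSpace (Matrix (Fin N) (Fin N) ℝ) := FiniteDimensional.complete ℝ _
  have hsum : Summable (fun n : ℕ => ((n ! : ℝ)⁻¹) • M ^ n) :=
    expSeries_summable' (𝕂 := ℝ) M
  set L := LinearMap.toContinuousLinearMap (Matrix.entryLinearMap ℝ ℝ i j) with hLdef
  have := hsum.map L.toLinearMap.toAddMonoidHom L.continuous
  exact this

theorem exp_algebraMap_real (r : ℝ) :
    exp (algebraMap ℝ (Matrix (Fin N) (Fin N) ℝ) r)
      = algebraMap ℝ (Matrix (Fin N) (Fin N) ℝ) (Real.exp r) := by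
  letI : NormedRing (Matrix (Fin N) (Fin N) ℝ) := Matrix.linftyOpNormedRing
  letI : NormedAlgebra ℝ (Matrix (Fin N) (Fin N) ℝ) := Matrix.linftyOpNormedAlgebra
  haveI : CompleteSpace (Matrix (Fin N) (Fin N) ℝ) := FiniteDimensional.complete ℝ _
  rw [Real.exp_eq_exp_ℝ]
  exact (algebraMap_exp_comm r).symm

theorem pos_flow (A : Matrix (Fin N) (Fin N) ℝ)
    (hML : ∀ i j, i ≠ j → 0 ≤ A i j)
    (x₀ : Fin N → ℝ) (hx₀ : ∀ i, 0 < x₀ i) {t : ℝ} (ht : 0 ≤ t) (i : Fin N) :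
    0 < (exp (t • A)).mulVec x₀ i := by
  classical
  set c : ℝ := ∑ k, |A k k| with hc
  set B : Matrix (Fin N) (Fin N) ℝ := A + c • (1 : Matrix (Fin N) (Fin N) ℝ) with hBdef
  have hB : ∀ i j, 0 ≤ B i j := by
    intro i j
    by_cases h : i = j
    · subst h
      have h1 : |A i i| ≤ c :=
        Finset.single_le_sum (f := fun k => |A k k|) (fun _ _ => abs_nonneg _)
          (Finset.mem_univ i)
      have h2 := neg_abs_le (A i i)
      simp only [hBdef, Matrix.add_apply, Matrix.smul_apply, Matrix.one_apply_eq,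
        smul_eq_mul, mul_one]
      linarith
    · simp only [hBdef, Matrix.add_apply, Matrix.smul_apply, Matrix.one_apply_ne h,
        smul_eq_mul, mul_zero, add_zero]
      exact hML i j h
  have htB : ∀ i j, 0 ≤ (t • B) i j := by
    intro i j
    simpa using mul_nonneg ht (hB i j)
  have hpow : ∀ n : ℕ, ∀ i j, 0 ≤ ((t • B) ^ n) i j := by
    intro n
    induction n with
    | zero =>
      intro i j
      rw [pow_zero]
      by_cases h : i = j
      · subst h; simp
      · simp [Matrix.one_apply_ne h]
    | succ n ih =>
      intro i j
      rw [pow_succ, Matrix.mul_apply]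
      exact Finset.sum_nonneg fun k _ => mul_nonneg (ih i k) (htB k j)
  have hEntry : ∀ i j, (1 : Matrix (Fin N) (Fin N) ℝ) i j ≤ exp (t • B) i j := by
    intro i j
    rw [exp_entry]
    have h0 := Summable.le_tsum (exp_entry_summable (t • B) i j) 0
      (fun n _ => mul_nonneg (by positivity) (hpow n i j))
    simpa using h0
  have hEntry0 : ∀ i j, (0 : ℝ) ≤ exp (t • B) i j := by
    intro i j
    refine le_trans ?_ (hEntry i j)
    by_cases h : i = j
    · subst h; simp
    · simp [Matrix.one_apply_ne h]
  have hBv : ∀ i, 0 < (exp (t • B)).mulVec x₀ i := by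
    intro i
    show 0 < ∑ j, exp (t • B) i j * x₀ j
    refine Finset.sum_pos' (fun j _ => mul_nonneg (hEntry0 i j) (hx₀ j).le)
      ⟨i, Finset.mem_univ i, ?_⟩
    have h1 : (1 : ℝ) ≤ exp (t • B) i i := by simpa using hEntry i i
    have := mul_pos (lt_of_lt_of_le one_pos h1) (hx₀ i)
    exact this
  have hsplit : t • A = t • B + (-(t * c)) • (1 : Matrix (Fin N) (Fin N) ℝ) := by
    rw [hBdef, smul_add, smul_smul]
    module
  have hcomm : Commute (t • B) ((-(t * c)) • (1 : Matrix (Fin N) (Fin N) ℝ)) :=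
    (Commute.one_right _).smul_right _
  have hexp1 : exp ((-(t * c)) • (1 : Matrix (Fin N) (Fin N) ℝ))
      = Real.exp (-(t * c)) • (1 : Matrix (Fin N) (Fin N) ℝ) := by
    have h1 := exp_algebraMap_real (N := N) (-(t * c))
    rw [Algebra.algebraMap_eq_smul_one, Algebra.algebraMap_eq_smul_one] at h1
    exact h1
  have hfact : exp (t • A)
      = Real.exp (-(t * c)) • exp (t • B) := by
    rw [hsplit]
    rw [Matrix.exp_add_of_commute _ _ hcomm, hexp1, mul_smul_comm, mul_one]
  rw [hfact, Matrix.smul_mulVec]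
  have := mul_pos (Real.exp_pos (-(t * c))) (hBv i)
  simpa using this

theorem amgm {a b u : ℝ} (ha : 0 ≤ a) (hb : 0 ≤ b) (hu : 0 < u) :
    2 * Real.sqrt (a * b) ≤ a * u + b / u := by
  have h1 : Real.sqrt (a * b) = Real.sqrt (a * u) * Real.sqrt (b / u) := by
    rw [← Real.sqrt_mul (by positivity)]
    congr 1
    field_simp
  have h2 := sq_nonneg (Real.sqrt (a * u) - Real.sqrt (b / u))
  have h3 : Real.sqrt (a * u) ^ 2 = a * u := Real.sq_sqrt (by positivity)
  have h4 : Real.sqrt (b / u) ^ 2 = b / u := Real.sq_sqrt (by positivity)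
  nlinarith [h1, h2, h3, h4]

end Stmt12Aux

open Stmt12Aux NormedSpace in
/-- Autonomous Kolotilina-type product estimate along `x(t) = e^{tA} x₀`. -/
theorem stmt12 {N : ℕ} (A : Matrix (Fin N) (Fin N) ℝ)
    (hML : ∀ i j, i ≠ j → 0 ≤ A i j)
    (x₀ : Fin N → ℝ) (hx₀ : ∀ i, 0 < x₀ i)
    (x : ℝ → Fin N → ℝ)
    (hx : ∀ t, x t = (NormedSpace.exp (t • A)).mulVec x₀) :
    ∀ t : ℝ, 0 ≤ t →
      ∏ i, x t i ≥
        Real.exp (t * (Matrix.trace A +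
          2 * ∑ p ∈ Finset.univ.filter (fun p : Fin N × Fin N => p.1 < p.2),
            Real.sqrt (A p.1 p.2 * A p.2 p.1))) * ∏ i, x 0 i := by
  classical
  intro t ht
  set C : ℝ := Matrix.trace A +
      2 * ∑ p ∈ Finset.univ.filter (fun p : Fin N × Fin N => p.1 < p.2),
        Real.sqrt (A p.1 p.2 * A p.2 p.1) with hCdef
  have hpos : ∀ s : ℝ, 0 ≤ s → ∀ i, 0 < x s i := by
    intro s hs i
    rw [hx]
    exact pos_flow A hML x₀ hx₀ hs i
  have hco : ∀ (s : ℝ) (i : Fin N), HasDerivAt (fun u => x u i) (A.mulVec (x s) i) s := by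
    intro s i
    have hfun : (fun u : ℝ => x u i) = (fun u : ℝ => (exp (u • A)).mulVec x₀ i) :=
      funext fun u => by rw [hx]
    rw [hfun, hx s]
    exact hasDerivAt_entry A x₀ i s
  set d : ℝ → ℝ := fun s => ∑ i, A.mulVec (x s) i / x s i with hd
  have hlog : ∀ s : ℝ, 0 ≤ s →
      HasDerivAt (fun u => Real.log (∏ i, x u i)) (d s) s := by
    intro s hs
    have hP : HasDerivAt (fun u => ∏ i, x u i)
        (∑ i, (∏ j ∈ Finset.univ.erase i, x s j) • (A.mulVec (x s) i)) s :=
      HasDerivAt.fun_finsetProd (fun i _ => hco s i)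
    have hPpos : 0 < ∏ i, x s i := Finset.prod_pos fun i _ => hpos s hs i
    have hL := hP.log hPpos.ne'
    convert hL using 1
    rw [eq_div_iff hPpos.ne', Finset.sum_mul]
    refine Finset.sum_congr rfl fun i _ => ?_
    have hxi := (hpos s hs i).ne'
    rw [smul_eq_mul,
      ← Finset.mul_prod_erase Finset.univ (fun j => x s j) (Finset.mem_univ i)]
    field_simp
  have hbound : ∀ s : ℝ, 0 ≤ s → C ≤ d s := by
    intro s hs
    have hp := hpos s hs
    set F : Fin N × Fin N → ℝ := fun p => A p.1 p.2 * x s p.2 / x s p.1 with hF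
    have h1 : d s = ∑ p ∈ (Finset.univ : Finset (Fin N × Fin N)), F p := by
      rw [hd, ← Finset.univ_product_univ, Finset.sum_product]
      refine Finset.sum_congr rfl fun i _ => ?_
      show (∑ j, A i j * x s j) / x s i = _
      rw [Finset.sum_div]
    have hsplit1 : ∑ p ∈ (Finset.univ : Finset (Fin N × Fin N)), F p
        = ∑ p ∈ Finset.univ.filter (fun p : Fin N × Fin N => p.1 = p.2), F p
          + ∑ p ∈ Finset.univ.filter (fun p : Fin N × Fin N => ¬p.1 = p.2), F p :=
      (Finset.sum_filter_add_sum_filter_not _ _ _).symm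
    have himg : (Finset.univ.filter (fun p : Fin N × Fin N => p.1 = p.2))
        = Finset.univ.image (fun i : Fin N => (i, i)) := by
      ext ⟨a, b⟩
      simp [Prod.ext_iff, eq_comm]
    have hdiag : ∑ p ∈ Finset.univ.filter (fun p : Fin N × Fin N => p.1 = p.2), F p
        = Matrix.trace A := by
      rw [himg, Finset.sum_image (by intro a _ b _ h; simpa [Prod.ext_iff] using h)]
      rw [Matrix.trace]
      refine Finset.sum_congr rfl fun i _ => ?_
      have hxi := (hp i).ne'
      simp [hF, Matrix.diag]
      field_simp
    have hsplit2 : ∑ p ∈ Finset.univ.filter (fun p : Fin N × Fin N => ¬p.1 = p.2), F p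
        = ∑ p ∈ Finset.univ.filter (fun p : Fin N × Fin N => p.1 < p.2), F p
          + ∑ p ∈ Finset.univ.filter (fun p : Fin N × Fin N => p.2 < p.1), F p := by
      rw [← Finset.sum_filter_add_sum_filter_not
        (Finset.univ.filter (fun p : Fin N × Fin N => ¬p.1 = p.2))
        (fun p => p.1 < p.2) F, Finset.filter_filter, Finset.filter_filter]
      congr 1
      · congr 1
        ext p
        simp only [Finset.mem_filter, Finset.mem_univ, true_and]
        exact ⟨fun h => h.2, fun h => ⟨ne_of_lt h, h⟩⟩
      · congr 1
        ext p
        simp only [Finset.mem_filter, Finset.mem_univ, true_and]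
        constructor
        · rintro ⟨h1', h2'⟩
          exact (not_lt.1 h2').lt_of_ne (fun e => h1' e.symm)
        · intro h
          exact ⟨(ne_of_lt h).symm, not_lt.2 h.le⟩
    have hswap : ∑ p ∈ Finset.univ.filter (fun p : Fin N × Fin N => p.2 < p.1), F p
        = ∑ p ∈ Finset.univ.filter (fun p : Fin N × Fin N => p.1 < p.2), F p.swap := by
      refine Finset.sum_equiv (Equiv.prodComm (Fin N) (Fin N)) ?_ ?_
      · intro p; simp
      · intro p _; rfl
    have hterm : ∀ p ∈ Finset.univ.filter (fun p : Fin N × Fin N => p.1 < p.2),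
        2 * Real.sqrt (A p.1 p.2 * A p.2 p.1) ≤ F p + F p.swap := by
      intro p hpmem
      have hlt : p.1 < p.2 := (Finset.mem_filter.1 hpmem).2
      have ha : 0 ≤ A p.1 p.2 := hML _ _ (ne_of_lt hlt)
      have hb : 0 ≤ A p.2 p.1 := hML _ _ (ne_of_lt hlt).symm
      have hu : 0 < x s p.2 / x s p.1 := div_pos (hp p.2) (hp p.1)
      have h := amgm ha hb hu
      have hFp : F p = A p.1 p.2 * (x s p.2 / x s p.1) := by
        rw [hF]; ring
      have hFq : F p.swap = A p.2 p.1 / (x s p.2 / x s p.1) := by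
        rw [hF]
        field_simp
        rfl
      rw [hFp, hFq]
      exact h
    have hsum_le : 2 * ∑ p ∈ Finset.univ.filter (fun p : Fin N × Fin N => p.1 < p.2),
        Real.sqrt (A p.1 p.2 * A p.2 p.1)
        ≤ ∑ p ∈ Finset.univ.filter (fun p : Fin N × Fin N => p.1 < p.2), (F p + F p.swap) := by
      rw [Finset.mul_sum]
      exact Finset.sum_le_sum hterm
    have : d s = Matrix.trace A
        + (∑ p ∈ Finset.univ.filter (fun p : Fin N × Fin N => p.1 < p.2), (F p + F p.swap)) := by
      rw [h1, hsplit1, hdiag, hsplit2, hswap, Finset.sum_add_distrib]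
    rw [this, hCdef]
    linarith
  have key := Convex.mul_sub_le_image_sub_of_le_deriv (convex_Ici (0 : ℝ))
    (f := fun u => Real.log (∏ i, x u i))
    (fun s hs => (hlog s hs).continuousAt.continuousWithinAt)
    (fun s hs => by
      rw [interior_Ici] at hs
      exact (hlog s hs.le).differentiableAt.differentiableWithinAt)
    (C := C)
    (fun s hs => by
      rw [interior_Ici] at hs
      rw [(hlog s hs.le).deriv]
      exact hbound s hs.le)
    0 Set.self_mem_Ici t ht ht
  have hPt : 0 < ∏ i, x t i := Finset.prod_pos fun i _ => hpos t ht i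
  have hP0 : 0 < ∏ i, x 0 i := Finset.prod_pos fun i _ => hpos 0 le_rfl i
  rw [ge_iff_le]
  calc Real.exp (t * C) * ∏ i, x 0 i
      = Real.exp (t * C + Real.log (∏ i, x 0 i)) := by
        rw [Real.exp_add, Real.exp_log hP0]
    _ ≤ Real.exp (Real.log (∏ i, x t i)) := by
        apply Real.exp_le_exp.2
        have : C * (t - 0) = C * t := by ring
        nlinarith [key]
    _ = ∏ i, x t i := Real.exp_log hPt
end

section
/- Let A ∈ ℝ^{N×N} be an ML-matrix and let i ≠ j. For the solution x(t) = e^{tA}x₀ with x₀ having all positive coordinates, the function t ↦ xᵢ(t)·xⱼ(t) satisfies (xᵢxⱼ)'(t) ≥ (a_{ii} + a_{jj} + 2√(a_{ij}a_{ji}))·xᵢ(t)·xⱼ(t) for all t ≥ 0. -/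
open NormedSpace

namespace Stmt16Aux

variable {N : ℕ}

/-- entry of exp as a tsum, plus summability of entries. -/
lemma exp_entry_eq (M : Matrix (Fin N) (Fin N) ℝ) (k l : Fin N) :
    exp M k l = ∑' n : ℕ, ((n.factorial : ℝ))⁻¹ * (M ^ n) k l ∧
      Summable (fun n : ℕ => ((n.factorial : ℝ))⁻¹ * (M ^ n) k l) := by
  letI : SeminormedRing (Matrix (Fin N) (Fin N) ℝ) := Matrix.linftyOpSemiNormedRing
  letI : NormedRing (Matrix (Fin N) (Fin N) ℝ) := Matrix.linftyOpNormedRing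
  letI : NormedAlgebra ℝ (Matrix (Fin N) (Fin N) ℝ) := Matrix.linftyOpNormedAlgebra
  letI : NormedSpace ℝ (Matrix (Fin N) (Fin N) ℝ) := inferInstance
  letI : CompleteSpace (Matrix (Fin N) (Fin N) ℝ) := FiniteDimensional.complete ℝ _
  have hsum : Summable fun n : ℕ => ((n.factorial : ℝ))⁻¹ • M ^ n := expSeries_summable' M
  let L0 : Matrix (Fin N) (Fin N) ℝ →ₗ[ℝ] ℝ :=
    { toFun := fun M => M k l, map_add' := fun _ _ => rfl, map_smul' := fun _ _ => rfl }
  let L : Matrix (Fin N) (Fin N) ℝ →L[ℝ] ℝ := L0.toContinuousLinearMap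
  have h1 : exp M k l = ∑' n : ℕ, ((n.factorial : ℝ))⁻¹ * (M ^ n) k l := by
    have := L.map_tsum hsum
    rw [exp_eq_tsum (𝕂 := ℝ)]; exact this
  have h2 : Summable (fun n : ℕ => ((n.factorial : ℝ))⁻¹ * (M ^ n) k l) := by
    have := hsum.map L.toLinearMap.toAddMonoidHom L.continuous
    exact this
  exact ⟨h1, h2⟩

lemma pow_entry_nonneg {M : Matrix (Fin N) (Fin N) ℝ} (hM : ∀ k l, 0 ≤ M k l) (n : ℕ) :
    ∀ k l, 0 ≤ (M ^ n) k l := by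
  induction n with
  | zero => intro k l; simp [Matrix.one_apply]; positivity
  | succ n ih =>
    intro k l
    rw [pow_succ, Matrix.mul_apply]
    exact Finset.sum_nonneg fun c _ => mul_nonneg (ih k c) (hM c l)

lemma exp_entry_nonneg {M : Matrix (Fin N) (Fin N) ℝ} (hM : ∀ k l, 0 ≤ M k l) (k l : Fin N) :
    0 ≤ exp M k l := by
  rw [(exp_entry_eq M k l).1]
  exact tsum_nonneg fun n => mul_nonneg (by positivity) (pow_entry_nonneg hM n k l)

lemma exp_diag_ge_one {M : Matrix (Fin N) (Fin N) ℝ} (hM : ∀ k l, 0 ≤ M k l) (k : Fin N) :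
    1 ≤ exp M k k := by
  obtain ⟨h1, h2⟩ := exp_entry_eq M k k
  rw [h1]
  have h0 : (((0:ℕ).factorial : ℝ))⁻¹ * ((M ^ 0) k k) = 1 := by simp [Matrix.one_apply]
  calc (1:ℝ) = (((0:ℕ).factorial : ℝ))⁻¹ * ((M ^ 0) k k) := h0.symm
    _ ≤ ∑' n : ℕ, ((n.factorial : ℝ))⁻¹ * (M ^ n) k k :=
      h2.le_tsum 0 fun n _ => mul_nonneg (by positivity) (pow_entry_nonneg hM n k k)

lemma exp_entries (A : Matrix (Fin N) (Fin N) ℝ)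
    (hML : ∀ i j, i ≠ j → 0 ≤ A i j) {t : ℝ} (ht : 0 ≤ t) :
    (∀ k l, 0 ≤ exp (t • A) k l) ∧ (∀ k, 0 < exp (t • A) k k) := by
  letI : SeminormedRing (Matrix (Fin N) (Fin N) ℝ) := Matrix.linftyOpSemiNormedRing
  letI : NormedRing (Matrix (Fin N) (Fin N) ℝ) := Matrix.linftyOpNormedRing
  letI : NormedAlgebra ℝ (Matrix (Fin N) (Fin N) ℝ) := Matrix.linftyOpNormedAlgebra
  letI : CompleteSpace (Matrix (Fin N) (Fin N) ℝ) := FiniteDimensional.complete ℝ _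
  set c : ℝ := ∑ l, |A l l| with hc
  set B : Matrix (Fin N) (Fin N) ℝ := A + c • (1 : Matrix (Fin N) (Fin N) ℝ) with hB
  have hBnn : ∀ k l, 0 ≤ B k l := by
    intro k l
    by_cases h : k = l
    · subst h
      have h1 : |A k k| ≤ c := Finset.single_le_sum (f := fun l => |A l l|)
        (fun _ _ => abs_nonneg _) (Finset.mem_univ k)
      simp only [hB, Matrix.add_apply, Matrix.smul_apply, Matrix.one_apply_eq, smul_eq_mul,
        mul_one]
      linarith [neg_abs_le (A k k)]
    · simp only [hB, Matrix.add_apply, Matrix.smul_apply, Matrix.one_apply_ne h, smul_eq_mul,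
        mul_zero, add_zero]
      exact hML k l h
  have htB : ∀ k l, 0 ≤ (t • B) k l := fun k l =>
    mul_nonneg ht (hBnn k l)
  have hsplit : t • A = t • B + (-(t * c)) • (1 : Matrix (Fin N) (Fin N) ℝ) := by
    rw [hB]; rw [smul_add, smul_smul]; ring_nf; module
  have hcomm : Commute (t • B) ((-(t * c)) • (1 : Matrix (Fin N) (Fin N) ℝ)) := by
    simpa using (Commute.one_right (t • B)).smul_right (-(t * c))
  have hexp1 : exp ((-(t * c)) • (1 : Matrix (Fin N) (Fin N) ℝ))
      = Real.exp (-(t * c)) • (1 : Matrix (Fin N) (Fin N) ℝ) := by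
    rw [← Algebra.algebraMap_eq_smul_one, ← Algebra.algebraMap_eq_smul_one,
      Real.exp_eq_exp_ℝ]
    exact (algebraMap_exp_comm (𝕂 := ℝ) (𝔸 := Matrix (Fin N) (Fin N) ℝ) _).symm
  have hmul : exp (t • A) = Real.exp (-(t * c)) • exp (t • B) := by
    rw [hsplit, Matrix.exp_add_of_commute _ _ hcomm, hexp1, mul_smul_comm, mul_one]
  constructor
  · intro k l
    rw [hmul]
    exact mul_nonneg (Real.exp_nonneg _) (exp_entry_nonneg htB k l)
  · intro k
    rw [hmul]
    have := exp_diag_ge_one htB k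
    have : (0:ℝ) < exp (t • B) k k := lt_of_lt_of_le one_pos this
    exact mul_pos (Real.exp_pos _) this

lemma hasDerivAt_entry (A : Matrix (Fin N) (Fin N) ℝ) (k l : Fin N) (t : ℝ) :
    HasDerivAt (fun s : ℝ => exp (s • A) k l) ((A * exp (t • A)) k l) t := by
  letI : SeminormedRing (Matrix (Fin N) (Fin N) ℝ) := Matrix.linftyOpSemiNormedRing
  letI : NormedRing (Matrix (Fin N) (Fin N) ℝ) := Matrix.linftyOpNormedRing
  letI : NormedAlgebra ℝ (Matrix (Fin N) (Fin N) ℝ) := Matrix.linftyOpNormedAlgebra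
  letI : NormedSpace ℝ (Matrix (Fin N) (Fin N) ℝ) := inferInstance
  letI : CompleteSpace (Matrix (Fin N) (Fin N) ℝ) := FiniteDimensional.complete ℝ _
  have h : HasDerivAt (fun s : ℝ => exp (s • A)) (A * exp (t • A)) t :=
    hasDerivAt_exp_smul_const' A t
  let L0 : Matrix (Fin N) (Fin N) ℝ →ₗ[ℝ] ℝ :=
    { toFun := fun M => M k l, map_add' := fun _ _ => rfl, map_smul' := fun _ _ => rfl }
  let L : Matrix (Fin N) (Fin N) ℝ →L[ℝ] ℝ := L0.toContinuousLinearMap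
  have := L.hasFDerivAt.comp_hasDerivAt t h
  exact this

end Stmt16Aux

/-- Differential inequality for `xᵢ xⱼ` along the flow of a cooperative autonomous system. -/
theorem stmt16 {N : ℕ} (A : Matrix (Fin N) (Fin N) ℝ)
    (hML : ∀ i j, i ≠ j → 0 ≤ A i j) (i j : Fin N) (hij : i ≠ j)
    (x₀ : Fin N → ℝ) (hx₀ : ∀ k, 0 < x₀ k)
    (x : ℝ → Fin N → ℝ)
    (hx : ∀ t, x t = (NormedSpace.exp (t • A)).mulVec x₀) :
    ∀ t : ℝ, 0 ≤ t →
      deriv (fun s => x s i * x s j) t ≥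
        (A i i + A j j + 2 * Real.sqrt (A i j * A j i)) * (x t i * x t j) := by
  intro t ht
  -- positivity of coordinates
  obtain ⟨hPnn, hPdiag⟩ := Stmt16Aux.exp_entries A hML ht
  have hxpos : ∀ k, 0 < x t k := by
    intro k
    rw [hx t]
    unfold Matrix.mulVec dotProduct
    have hle : ∀ l ∈ Finset.univ, l ∉ ({k} : Finset (Fin N)) →
        0 ≤ NormedSpace.exp (t • A) k l * x₀ l :=
      fun l _ _ => mul_nonneg (hPnn k l) (hx₀ l).le
    have h1 : ∑ l ∈ ({k} : Finset (Fin N)), NormedSpace.exp (t • A) k l * x₀ l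
        ≤ ∑ l, NormedSpace.exp (t • A) k l * x₀ l :=
      Finset.sum_le_sum_of_subset_of_nonneg (Finset.subset_univ _) hle
    have h2 : 0 < NormedSpace.exp (t • A) k k * x₀ k := mul_pos (hPdiag k) (hx₀ k)
    calc (0:ℝ) < NormedSpace.exp (t • A) k k * x₀ k := h2
      _ = ∑ l ∈ ({k} : Finset (Fin N)), NormedSpace.exp (t • A) k l * x₀ l := by
          rw [Finset.sum_singleton]
      _ ≤ _ := h1
  have hxnn : ∀ s : ℝ, 0 ≤ s → ∀ k, 0 ≤ x s k := by
    intro s hs k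
    obtain ⟨hPnn', _⟩ := Stmt16Aux.exp_entries A hML hs
    rw [hx s]
    unfold Matrix.mulVec dotProduct
    exact Finset.sum_nonneg fun l _ => mul_nonneg (hPnn' k l) (hx₀ l).le
  -- derivative of coordinates
  have hD : ∀ k, HasDerivAt (fun s => x s k) ((A.mulVec (x t)) k) t := by
    intro k
    have h1 : ∀ s : ℝ, x s k = ∑ l, NormedSpace.exp (s • A) k l * x₀ l := by
      intro s; rw [hx s]; rfl
    have h2 : HasDerivAt (fun s : ℝ => ∑ l, NormedSpace.exp (s • A) k l * x₀ l)
        (∑ l, (A * NormedSpace.exp (t • A)) k l * x₀ l) t := by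
      apply HasDerivAt.fun_sum
      intro l _
      exact (Stmt16Aux.hasDerivAt_entry A k l t).mul_const (x₀ l)
    have h3 : (∑ l, (A * NormedSpace.exp (t • A)) k l * x₀ l) = (A.mulVec (x t)) k := by
      rw [hx t, Matrix.mulVec_mulVec]; rfl
    rw [← h3]
    exact h2.congr_of_eventuallyEq (Filter.Eventually.of_forall fun s => h1 s)
  have hderiv : deriv (fun s => x s i * x s j) t
      = (A.mulVec (x t)) i * x t j + x t i * (A.mulVec (x t)) j :=
    ((hD i).mul (hD j)).deriv
  rw [hderiv]
  -- lower bounds on A.mulVec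
  set p := x t i with hp
  set q := x t j with hq
  have hpq : 0 < p := hxpos i
  have hqq : 0 < q := hxpos j
  have hbound : ∀ a b : Fin N, a ≠ b →
      A a a * x t a + A a b * x t b ≤ (A.mulVec (x t)) a := by
    intro a b hab
    unfold Matrix.mulVec dotProduct
    rw [← Finset.add_sum_erase _ _ (Finset.mem_univ a)]
    gcongr
    have hsub : ({b} : Finset (Fin N)) ⊆ Finset.univ.erase a :=
      Finset.singleton_subset_iff.mpr (Finset.mem_erase.mpr ⟨Ne.symm hab, Finset.mem_univ b⟩)
    calc A a b * x t b = ∑ l ∈ ({b} : Finset (Fin N)), A a l * x t l := by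
          rw [Finset.sum_singleton]
      _ ≤ ∑ l ∈ Finset.univ.erase a, A a l * x t l :=
          Finset.sum_le_sum_of_subset_of_nonneg hsub fun l hl _ =>
            mul_nonneg (hML a l (Finset.ne_of_mem_erase hl).symm) (hxpos l).le
  have hbi : A i i * p + A i j * q ≤ (A.mulVec (x t)) i := hbound i j hij
  have hbj : A j j * q + A j i * p ≤ (A.mulVec (x t)) j := hbound j i hij.symm
  have hstep1 : (A i i * p + A i j * q) * q + p * (A j j * q + A j i * p)
      ≤ (A.mulVec (x t)) i * q + p * (A.mulVec (x t)) j := by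
    gcongr
  -- AM-GM part
  have ha : 0 ≤ A i j := hML i j hij
  have hb : 0 ≤ A j i := hML j i hij.symm
  have hsq : Real.sqrt (A i j * A j i) = Real.sqrt (A i j) * Real.sqrt (A j i) :=
    Real.sqrt_mul ha _
  have hsa : Real.sqrt (A i j) ^ 2 = A i j := Real.sq_sqrt ha
  have hsb : Real.sqrt (A j i) ^ 2 = A j i := Real.sq_sqrt hb
  have hamgm : (A i i + A j j + 2 * Real.sqrt (A i j * A j i)) * (p * q)
      ≤ (A i i * p + A i j * q) * q + p * (A j j * q + A j i * p) := by
    have e1 : (Real.sqrt (A i j) * q) ^ 2 = A i j * q ^ 2 := by rw [mul_pow, hsa]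
    have e2 : (Real.sqrt (A j i) * p) ^ 2 = A j i * p ^ 2 := by rw [mul_pow, hsb]
    have key : 2 * (Real.sqrt (A i j) * Real.sqrt (A j i)) * (p * q)
        ≤ A i j * q ^ 2 + A j i * p ^ 2 := by
      nlinarith [sq_nonneg (Real.sqrt (A i j) * q - Real.sqrt (A j i) * p), e1, e2]
    rw [hsq]
    nlinarith [key]
  exact le_trans hamgm hstep1
end
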